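/- arXiv:1311.4475 — 10 statements merged into one kernel-verified Lean document; each statement's English description precedes it below -/
import Mathlib

section
/- Let N be a positive natural number divisible by 4. The number of 3×N matrices with entries in {−1,1} whose rows are pairwise orthogonal equals 2^N · N! / ((N/4)!)^4, i.e., 2^N times the multinomial coefficient C(N; N/4, N/4, N/4, N/4). -/
open Finset Equiv

section helpers

variable {α β : Type*} [Fintype α] [DecidableEq α] [Fintype β] [DecidableEq β]

private lemma exists_perm_comp' (g₀ g : α → β)
    (hfib : ∀ b, (univ.filter fun a => g₀ a = b).card = (univ.filter fun a => g a = b).card) :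
    ∃ σ : Equiv.Perm α, g₀ ∘ σ = g := by
  have hcard : ∀ b, Fintype.card {a // g a = b} = Fintype.card {a // g₀ a = b} := by
    intro b
    simp only [Fintype.card_subtype]
    exact (hfib b).symm
  let ψ : ∀ b, {a // g a = b} ≃ {a // g₀ a = b} := fun b => Fintype.equivOfCardEq (hcard b)
  refine ⟨(Equiv.sigmaFiberEquiv g).symm.trans ((Equiv.sigmaCongrRight ψ).trans
    (Equiv.sigmaFiberEquiv g₀)), ?_⟩
  funext a
  simp only [Function.comp_apply, Equiv.trans_apply]
  have h1 : (Equiv.sigmaFiberEquiv g).symm a = ⟨g a, ⟨a, rfl⟩⟩ := rfl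
  rw [h1]
  have h2 : (Equiv.sigmaCongrRight ψ) ⟨g a, ⟨a, rfl⟩⟩ = ⟨g a, ψ (g a) ⟨a, rfl⟩⟩ := rfl
  rw [h2]
  exact (ψ (g a) ⟨a, rfl⟩).2

private lemma card_fiber_count' (m : β → ℕ) (g₀ : α → β)
    (hg₀ : ∀ b, (univ.filter fun a => g₀ a = b).card = m b) :
    Nat.card {g : α → β // ∀ b, (univ.filter fun a => g a = b).card = m b} *
      ∏ b, (m b).factorial = (Fintype.card α).factorial := by
  classical
  set T : Finset (α → β) := univ.filter fun g => ∀ b, (univ.filter fun a => g a = b).card = m b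
    with hT
  have hcardS : Nat.card {g : α → β // ∀ b, (univ.filter fun a => g a = b).card = m b} = T.card := by
    rw [Nat.card_eq_fintype_card, Fintype.card_subtype]
  have hperm : ∀ (σ : Perm α) (g : α → β) (b : β),
      (univ.filter fun a => g (σ a) = b).card = (univ.filter fun a => g a = b).card := by
    intro σ g b
    apply Finset.card_nbij (fun a => σ a)
    · intro a ha
      simp only [mem_filter, mem_univ, true_and] at ha ⊢
      simpa using ha
    · intro a ha a' ha' h
      exact σ.injective h
    · intro a ha
      refine ⟨σ.symm a, ?_, by simp⟩
      simp only [Set.mem_setOf_eq, coe_filter, mem_univ, true_and] at ha ⊢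
      simpa using ha
  have hmem : ∀ σ : Perm α, g₀ ∘ σ ∈ T := by
    intro σ
    simp only [hT, mem_filter, mem_univ, true_and]
    intro b
    rw [show (univ.filter fun a => (g₀ ∘ σ) a = b) = (univ.filter fun a => g₀ (σ a) = b) from rfl,
      hperm σ g₀ b]
    exact hg₀ b
  have key : (univ : Finset (Perm α)).card = ∑ g ∈ T, (univ.filter fun σ : Perm α => g₀ ∘ σ = g).card :=
    Finset.card_eq_sum_card_fiberwise (fun σ _ => hmem σ)
  have hstab : (univ.filter fun τ : Perm α => g₀ ∘ τ = g₀).card = ∏ b, (m b).factorial := by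
    have := DomMulAct.stabilizer_card g₀
    rw [Fintype.card_subtype] at this
    rw [this]
    exact Finset.prod_congr rfl fun b _ => by rw [Fintype.card_subtype, hg₀ b]
  have hfibcard : ∀ g ∈ T, (univ.filter fun σ : Perm α => g₀ ∘ σ = g).card = ∏ b, (m b).factorial := by
    intro g hg
    simp only [hT, mem_filter, mem_univ, true_and] at hg
    obtain ⟨σ₀, hσ₀⟩ := exists_perm_comp' g₀ g (fun b => (hg₀ b).trans (hg b).symm)
    rw [← hstab]
    have hσ₀' : ∀ x, g₀ (σ₀ x) = g x := fun x => congrFun hσ₀ x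
    apply Finset.card_nbij' (fun σ => σ₀.symm.trans σ) (fun τ => σ₀.trans τ)
    · intro σ hσ
      simp only [mem_coe, mem_filter, mem_univ, true_and] at hσ ⊢
      have hσ' : ∀ x, g₀ (σ x) = g x := fun x => congrFun hσ x
      funext a
      simp only [Function.comp_apply, Equiv.trans_apply]
      rw [hσ' (σ₀.symm a), ← hσ₀' (σ₀.symm a), Equiv.apply_symm_apply]
    · intro τ hτ
      simp only [mem_coe, mem_filter, mem_univ, true_and] at hτ ⊢
      have hτ' : ∀ x, g₀ (τ x) = g₀ x := fun x => congrFun hτ x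
      funext a
      simp only [Function.comp_apply, Equiv.trans_apply]
      rw [hτ' (σ₀ a), hσ₀' a]
    · intro σ hσ
      ext a
      simp
    · intro τ hτ
      ext a
      simp
  rw [hcardS]
  calc T.card * ∏ b, (m b).factorial = ∑ g ∈ T, ∏ b, (m b).factorial := by
        rw [Finset.sum_const, smul_eq_mul]
      _ = ∑ g ∈ T, (univ.filter fun σ : Perm α => g₀ ∘ σ = g).card := by
        exact Finset.sum_congr rfl fun g hg => (hfibcard g hg).symm
      _ = (univ : Finset (Perm α)).card := key.symm
      _ = (Fintype.card α).factorial := by rw [Finset.card_univ, Fintype.card_perm]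

end helpers

private lemma exists_uniform_fibers' (β : Type*) [Fintype β] [DecidableEq β] (N k : ℕ)
    (hN : N = Fintype.card β * k) :
    ∃ g₀ : Fin N → β, ∀ b, (univ.filter fun a => g₀ a = b).card = k := by
  let φ : Fin N ≃ β × Fin k :=
    (finCongr hN).trans (finProdFinEquiv.symm.trans
      (Equiv.prodCongr (Fintype.equivFin β).symm (Equiv.refl _)))
  refine ⟨fun i => (φ i).1, fun b => ?_⟩
  rw [← Fintype.card_subtype]
  rw [Fintype.card_congr (φ.subtypeEquiv (q := fun x => x.1 = b) fun i => Iff.rfl)]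
  rw [Fintype.card_congr (Equiv.prodSubtypeFstEquivSubtypeProd (p := fun x => x = b))]
  rw [Fintype.card_prod, Fintype.card_subtype_eq, one_mul, Fintype.card_fin]

private lemma sums_iff_fibers' (N : ℕ) (h4 : 4 ∣ N) (g : Fin N → ℤˣ × ℤˣ) :
    ((∑ k, ((g k).1 : ℤ) = 0) ∧ (∑ k, ((g k).2 : ℤ) = 0) ∧
     (∑ k, (((g k).1 : ℤ) * ((g k).2 : ℤ)) = 0)) ↔
    ∀ c, (univ.filter fun k => g k = c).card = N / 4 := by
  classical
  set n : ℤˣ × ℤˣ → ℕ := fun c => (univ.filter fun k => g k = c).card with hn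
  have key : ∀ F : ℤˣ × ℤˣ → ℤ, ∑ k, F (g k) = ∑ c : ℤˣ × ℤˣ, (n c : ℤ) * F c := by
    intro F
    rw [← Finset.sum_fiberwise univ g (fun k => F (g k))]
    refine Finset.sum_congr rfl fun c _ => ?_
    rw [Finset.sum_congr rfl (fun k hk => by rw [(Finset.mem_filter.mp hk).2] :
      ∀ k ∈ univ.filter fun k => g k = c, F (g k) = F c)]
    rw [Finset.sum_const, nsmul_eq_mul]
  have htot : ∑ c : ℤˣ × ℤˣ, n c = N := by
    have := Finset.card_eq_sum_card_fiberwise (fun (k : Fin N) (_ : k ∈ univ) => mem_univ (g k))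
    simpa using this.symm
  constructor
  · rintro ⟨h1, h2, h3⟩
    rw [key (fun c => (c.1 : ℤ))] at h1
    rw [key (fun c => (c.2 : ℤ))] at h2
    rw [key (fun c => (c.1 : ℤ) * (c.2 : ℤ))] at h3
    simp only [Fintype.sum_prod_type, UnitsInt.univ,
      Finset.sum_insert (by decide : (1:ℤˣ) ∉ ({-1} : Finset ℤˣ)), Finset.sum_singleton,
      Units.val_one, Units.val_neg, mul_one, mul_neg, neg_neg, one_mul] at h1 h2 h3
    rw [Fintype.sum_prod_type] at htot
    simp only [UnitsInt.univ,
      Finset.sum_insert (by decide : (1:ℤˣ) ∉ ({-1} : Finset ℤˣ)), Finset.sum_singleton] at htot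
    intro c
    change n c = N / 4
    obtain ⟨u, v⟩ := c
    rcases Int.units_eq_one_or u with rfl | rfl <;> rcases Int.units_eq_one_or v with rfl | rfl <;>
      omega
  · intro h
    have hnc : ∀ c, n c = N / 4 := h
    refine ⟨?_, ?_, ?_⟩
    · rw [key (fun c => (c.1 : ℤ))]
      simp only [hnc]
      simp [Fintype.sum_prod_type, UnitsInt.univ,
        Finset.sum_insert (by decide : (1:ℤˣ) ∉ ({-1} : Finset ℤˣ))]
    · rw [key (fun c => (c.2 : ℤ))]
      simp only [hnc]
      simp [Fintype.sum_prod_type, UnitsInt.univ,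
        Finset.sum_insert (by decide : (1:ℤˣ) ∉ ({-1} : Finset ℤˣ))]
    · rw [key (fun c => (c.1 : ℤ) * (c.2 : ℤ))]
      simp only [hnc]
      simp [Fintype.sum_prod_type, UnitsInt.univ,
        Finset.sum_insert (by decide : (1:ℤˣ) ∉ ({-1} : Finset ℤˣ))]

private def colEquiv : (Fin 3 → ℤˣ) ≃ ℤˣ × (ℤˣ × ℤˣ) where
  toFun s := (s 0, (s 0 * s 1, s 0 * s 2))
  invFun x := ![x.1, x.1 * x.2.1, x.1 * x.2.2]
  left_inv s := by
    funext i
    fin_cases i <;>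
      simp [← mul_assoc, Int.units_mul_self]
  right_inv x := by
    simp [← mul_assoc, Int.units_mul_self]

theorem stmt_1 (N : ℕ) (hN : 0 < N) (h4 : 4 ∣ N) :
    Nat.card {H : Matrix (Fin 3) (Fin N) ℤˣ //
        ∀ i j : Fin 3, i ≠ j → ∑ k, ((H i k : ℤ) * (H j k : ℤ)) = 0} =
      2 ^ N * (N.factorial / (N / 4).factorial ^ 4) := by
  classical
  set C' : (Fin N → ℤˣ × ℤˣ) → Prop := fun g =>
    (∑ k, ((g k).1 : ℤ) = 0) ∧ (∑ k, ((g k).2 : ℤ) = 0) ∧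
      (∑ k, (((g k).1 : ℤ) * ((g k).2 : ℤ)) = 0) with hC'
  -- the big equivalence
  let E : Matrix (Fin 3) (Fin N) ℤˣ ≃ (Fin N → ℤˣ) × (Fin N → ℤˣ × ℤˣ) :=
    (Matrix.of).symm.trans ((Equiv.piComm fun (_ : Fin 3) (_ : Fin N) => ℤˣ).trans
      ((Equiv.piCongrRight fun _ => colEquiv).trans
        (Equiv.arrowProdEquivProdArrow (Fin N) (fun _ => ℤˣ) (fun _ => ℤˣ × ℤˣ))))
  have hE2 : ∀ H : Matrix (Fin 3) (Fin N) ℤˣ,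
      (E H).2 = fun k => (H 0 k * H 1 k, H 0 k * H 2 k) := fun _ => rfl
  have sq : ∀ u : ℤˣ, (u : ℤ) * (u : ℤ) = 1 := fun u => by
    rw [← Units.val_mul, Int.units_mul_self, Units.val_one]
  have hcond : ∀ H : Matrix (Fin 3) (Fin N) ℤˣ,
      (∀ i j : Fin 3, i ≠ j → ∑ k, ((H i k : ℤ) * (H j k : ℤ)) = 0) ↔ C' (E H).2 := by
    intro H
    rw [hE2 H, hC']
    constructor
    · intro h
      refine ⟨?_, ?_, ?_⟩
      · simpa [Units.val_mul] using h 0 1 (by decide)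
      · simpa [Units.val_mul] using h 0 2 (by decide)
      · have h12 := h 1 2 (by decide)
        calc ∑ k, (((H 0 k * H 1 k : ℤˣ) : ℤ) * ((H 0 k * H 2 k : ℤˣ) : ℤ))
            = ∑ k, ((H 1 k : ℤ) * (H 2 k : ℤ)) := by
              refine Finset.sum_congr rfl fun k _ => ?_
              push_cast [Units.val_mul]
              linear_combination ((H 1 k : ℤ) * (H 2 k : ℤ)) * sq (H 0 k)
          _ = 0 := h12
    · rintro ⟨h1, h2, h3⟩
      simp only [Units.val_mul] at h1 h2
      have h12 : ∑ k, ((H 1 k : ℤ) * (H 2 k : ℤ)) = 0 := by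
        rw [← h3]
        refine Finset.sum_congr rfl fun k _ => ?_
        push_cast [Units.val_mul]
        linear_combination (-(H 1 k : ℤ) * (H 2 k : ℤ)) * sq (H 0 k)
      have comm : ∀ (f h : Fin N → ℤ), ∑ k, f k * h k = ∑ k, h k * f k :=
        fun f h => Finset.sum_congr rfl fun k _ => mul_comm _ _
      intro i j hij
      fin_cases i <;> fin_cases j
      · exact absurd rfl hij
      · exact h1
      · exact h2
      · exact (comm _ _).trans h1
      · exact absurd rfl hij
      · exact h12
      · exact (comm _ _).trans h2
      · exact (comm _ _).trans h12
      · exact absurd rfl hij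
  have step1 : Nat.card {H : Matrix (Fin 3) (Fin N) ℤˣ //
      ∀ i j : Fin 3, i ≠ j → ∑ k, ((H i k : ℤ) * (H j k : ℤ)) = 0}
      = Nat.card {x : (Fin N → ℤˣ) × (Fin N → ℤˣ × ℤˣ) // C' x.2} :=
    Nat.card_congr (Equiv.subtypeEquiv E hcond)
  have E2 : {x : (Fin N → ℤˣ) × (Fin N → ℤˣ × ℤˣ) // C' x.2} ≃
      (Fin N → ℤˣ) × {g : Fin N → ℤˣ × ℤˣ // C' g} :=
    ⟨fun x => (x.1.1, ⟨x.1.2, x.2⟩), fun y => ⟨(y.1, y.2.1), y.2.2⟩,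
      fun _ => rfl, fun _ => rfl⟩
  have E3 : {g : Fin N → ℤˣ × ℤˣ // C' g} ≃
      {g : Fin N → ℤˣ × ℤˣ // ∀ c, (univ.filter fun k => g k = c).card = N / 4} :=
    Equiv.subtypeEquiv (Equiv.refl _) (fun g => by
      exact sums_iff_fibers' N h4 g)
  have h44 : Fintype.card (ℤˣ × ℤˣ) = 4 := by
    rw [Fintype.card_prod, Fintype.card_units_int]
  obtain ⟨g₀, hg₀⟩ := exists_uniform_fibers' (ℤˣ × ℤˣ) N (N / 4)
    (by rw [h44, Nat.mul_div_cancel' h4])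
  have hcount := card_fiber_count' (fun _ => N / 4) g₀ (fun b => hg₀ b)
  have hprod : (∏ _b : ℤˣ × ℤˣ, (N / 4).factorial) = (N / 4).factorial ^ 4 := by
    rw [Finset.prod_const, Finset.card_univ, Fintype.card_prod, Fintype.card_units_int]
  rw [hprod, Fintype.card_fin] at hcount
  have hdiv : N.factorial / (N / 4).factorial ^ 4 =
      Nat.card {g : Fin N → ℤˣ × ℤˣ //
        ∀ c, (univ.filter fun k => g k = c).card = N / 4} :=
    Nat.div_eq_of_eq_mul_left (by positivity) hcount.symm
  rw [step1, Nat.card_congr E2, Nat.card_prod, Nat.card_congr E3, hdiv]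
  congr 1
  simp [Nat.card_eq_fintype_card, Fintype.card_fun]
end

section
/- Let N be divisible by 4. The number of 4×N matrices with entries in {−1,1} with pairwise orthogonal rows equals 2^N · Σ_{a+b=N/4} C(N; a, b, b, a, b, a, a, b), where the sum is over nonnegative integers a, b with a + b = N/4 and C(N; ·) denotes the multinomial coefficient with the eight listed parts. -/
open Finset Equiv
open scoped Nat

set_option linter.unusedSectionVars false
set_option maxHeartbeats 1000000

section Count

variable {β : Type} [Fintype β] [DecidableEq β]

private def sigmaFstEquiv (n : β → ℕ) (b : β) : {x : Σ c : β, Fin (n c) // x.1 = b} ≃ Fin (n b) where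
  toFun x := Fin.cast (congrArg n x.2) x.1.2
  invFun y := ⟨⟨b, y⟩, rfl⟩
  left_inv := by rintro ⟨⟨c, y⟩, rfl⟩; rfl
  right_inv y := rfl

private theorem exists_perm {M : ℕ} (f₀ f : Fin M → β)
    (h : ∀ b, Fintype.card {k // f k = b} = Fintype.card {k // f₀ k = b}) :
    ∃ g : Equiv.Perm (Fin M), f₀ ∘ g = f := by
  have eb : ∀ b : β, {k // f k = b} ≃ {k // f₀ k = b} :=
    fun b => Fintype.equivOfCardEq (h b)
  refine ⟨(Equiv.sigmaFiberEquiv f).symm.trans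
    ((Equiv.sigmaCongrRight eb).trans (Equiv.sigmaFiberEquiv f₀)), ?_⟩
  funext k
  simp only [Function.comp_apply, Equiv.trans_apply]
  have : (Equiv.sigmaFiberEquiv f).symm k = ⟨f k, ⟨k, rfl⟩⟩ := rfl
  rw [this]
  exact (eb (f k) ⟨k, rfl⟩).2

private def cosetEquiv {M : ℕ} (f₀ f : Fin M → β) (g₀ : Equiv.Perm (Fin M)) (hg₀ : f₀ ∘ g₀ = f) :
    {h : Equiv.Perm (Fin M) // f₀ ∘ h = f₀} ≃ {g : Equiv.Perm (Fin M) // f₀ ∘ g = f} where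
  toFun h := ⟨g₀.trans h.1, by
    funext x
    have := congrFun h.2 (g₀ x)
    simp only [Function.comp_apply] at this ⊢
    rw [Equiv.trans_apply, this, ← hg₀]; rfl⟩
  invFun g := ⟨g₀.symm.trans g.1, by
    funext x
    have := congrFun g.2 (g₀.symm x)
    simp only [Function.comp_apply] at this ⊢
    rw [Equiv.trans_apply, this, ← hg₀]
    simp⟩
  left_inv h := by ext x; simp
  right_inv g := by ext x; simp

theorem card_fiber_eq_multinomial (M : ℕ) (n : β → ℕ) (hn : ∑ b, n b = M) :
    Nat.card {f : Fin M → β // ∀ b, (univ.filter fun k => f k = b).card = n b} =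
      Nat.multinomial univ n := by
  classical
  rw [Nat.card_eq_fintype_card]
  obtain ⟨e⟩ : Nonempty ((Σ b : β, Fin (n b)) ≃ Fin M) := by
    apply Fintype.card_eq.mp; simp [Fintype.card_sigma, hn]
  set f₀ : Fin M → β := fun k => (e.symm k).1 with hf₀def
  have hcnt : ∀ (f : Fin M → β) (b : β),
      (univ.filter fun k => f k = b).card = Fintype.card {k // f k = b} := by
    intro f b; rw [Fintype.card_subtype]
  have hf₀ : ∀ b, (univ.filter fun k => f₀ k = b).card = n b := by
    intro b
    rw [hcnt, Fintype.card_congr ((Equiv.subtypeEquiv e (fun x => by simp [hf₀def])).symm.trans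
      (sigmaFstEquiv n b))]
    exact Fintype.card_fin _
  set T := {f : Fin M → β // ∀ b, (univ.filter fun k => f k = b).card = n b} with hT
  have hfib : ∀ f : T, Fintype.card {g : Equiv.Perm (Fin M) // f₀ ∘ g = f.1}
      = ∏ b, (n b)! := by
    intro f
    obtain ⟨g₀, hg₀⟩ := exists_perm f₀ f.1 (fun b => by rw [← hcnt, ← hcnt, f.2 b, hf₀ b])
    rw [← Fintype.card_congr (cosetEquiv f₀ f.1 g₀ hg₀), DomMulAct.stabilizer_card]
    exact Finset.prod_congr rfl fun b _ => by rw [← hcnt, hf₀]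
  have hmem : ∀ g : Equiv.Perm (Fin M), ∀ b,
      (univ.filter fun k => (f₀ ∘ g) k = b).card = n b := by
    intro g b
    rw [hcnt, ← hf₀ b, hcnt]
    exact Fintype.card_congr (Equiv.subtypeEquiv g fun a => Iff.rfl)
  set Φ : Equiv.Perm (Fin M) → T := fun g => ⟨f₀ ∘ g, hmem g⟩ with hΦ
  have key : Fintype.card (Equiv.Perm (Fin M)) = Fintype.card T * ∏ b, (n b)! := by
    rw [← Fintype.card_congr (Equiv.sigmaFiberEquiv Φ), Fintype.card_sigma]
    rw [Finset.sum_congr rfl (fun f _ => show Fintype.card {g // Φ g = f} = ∏ b, (n b)! from ?_)]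
    · rw [Finset.sum_const, smul_eq_mul, Finset.card_univ]
    · rw [← hfib f]
      exact Fintype.card_congr (Equiv.subtypeEquiv (Equiv.refl _)
        (fun g => ⟨fun h => congrArg Subtype.val h, fun h => Subtype.ext h⟩))
  rw [Fintype.card_perm, Fintype.card_fin] at key
  have hspec := Nat.multinomial_spec univ n
  rw [hn] at hspec
  have hpos : 0 < ∏ b, (n b)! := Finset.prod_pos fun b _ => Nat.factorial_pos _
  apply Nat.eq_of_mul_eq_mul_right hpos
  calc Fintype.card T * ∏ b, (n b)! = M ! := key.symm
    _ = Nat.multinomial univ n * ∏ b, (n b)! := by rw [← hspec, mul_comm]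

end Count

/-! ### Column encoding -/

def hcol : Fin 8 → Fin 4 → ℤˣ :=
  ![![1,1,1,1], ![1,-1,1,1], ![1,1,-1,1], ![1,-1,-1,1],
    ![1,1,1,-1], ![1,-1,1,-1], ![1,1,-1,-1], ![1,-1,-1,-1]]

theorem hc0 : hcol 0 = ![1,1,1,1] := rfl
theorem hc1 : hcol 1 = ![1,-1,1,1] := rfl
theorem hc2 : hcol 2 = ![1,1,-1,1] := rfl
theorem hc3 : hcol 3 = ![1,-1,-1,1] := rfl
theorem hc4 : hcol 4 = ![1,1,1,-1] := rfl
theorem hc5 : hcol 5 = ![1,-1,1,-1] := rfl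
theorem hc6 : hcol 6 = ![1,1,-1,-1] := rfl
theorem hc7 : hcol 7 = ![1,-1,-1,-1] := rfl

def henc (c : Fin 4 → ℤˣ) : Fin 8 :=
  (if c 0 = c 1 then 0 else 1) + (if c 0 = c 2 then 0 else 2) + (if c 0 = c 3 then 0 else 4)

theorem henc_decode : ∀ (σ : ℤˣ) (m : Fin 8), henc (fun i => σ * hcol m i) = m := by decide
theorem decode_henc : ∀ (c : Fin 4 → ℤˣ) (i : Fin 4), c 0 * hcol (henc c) i = c i := by decide
theorem hcol_zero : ∀ m : Fin 8, hcol m 0 = 1 := by decide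
theorem sigma_cancel : ∀ (σ a b : ℤˣ), ((σ * a : ℤˣ) : ℤ) * ((σ * b : ℤˣ) : ℤ) = (a : ℤ) * b := by
  decide
theorem henc_prod : ∀ (c : Fin 4 → ℤˣ) (i j : Fin 4),
    ((hcol (henc c) i : ℤˣ) : ℤ) * ((hcol (henc c) j : ℤˣ) : ℤ) = (c i : ℤ) * c j := by decide

/-- the orthogonality condition on the dephased class function -/
def POrth {N : ℕ} (v : Fin N → Fin 8) : Prop :=
  ∀ i j : Fin 4, i ≠ j → ∑ k, (((hcol (v k) i : ℤˣ) : ℤ) * ((hcol (v k) j : ℤˣ) : ℤ)) = 0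

instance {N : ℕ} : DecidablePred (POrth (N := N)) := fun _ => by unfold POrth; infer_instance

/-- dephasing equivalence -/
def mainEquiv (N : ℕ) :
    ((Fin N → ℤˣ) × {v : Fin N → Fin 8 // POrth v}) ≃
      {H : Matrix (Fin 4) (Fin N) ℤˣ //
        ∀ i j : Fin 4, i ≠ j → ∑ k, ((H i k : ℤ) * (H j k : ℤ)) = 0} where
  toFun p := ⟨fun i k => p.1 k * hcol (p.2.1 k) i, by
    intro i j hij
    refine (Finset.sum_congr rfl fun k _ => ?_).trans (p.2.2 i j hij)
    exact sigma_cancel (p.1 k) (hcol (p.2.1 k) i) (hcol (p.2.1 k) j)⟩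
  invFun H := (fun k => H.1 0 k, ⟨fun k => henc (fun i => H.1 i k), by
    intro i j hij
    refine (Finset.sum_congr rfl fun k _ => ?_).trans (H.2 i j hij)
    exact henc_prod (fun i => H.1 i k) i j⟩)
  left_inv p := by
    refine Prod.ext ?_ (Subtype.ext ?_)
    · funext k
      show p.1 k * hcol (p.2.1 k) 0 = p.1 k
      rw [hcol_zero, mul_one]
    · funext k
      show henc (fun i => p.1 k * hcol (p.2.1 k) i) = p.2.1 k
      exact henc_decode _ _
  right_inv H := by
    apply Subtype.ext
    funext i k
    exact decode_henc (fun i => H.1 i k) i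

/-! ### counting the class functions -/

def pat (x : ℕ × ℕ) : Fin 8 → ℕ := ![x.1, x.2, x.2, x.1, x.2, x.1, x.1, x.2]

theorem pat0 (x : ℕ × ℕ) : pat x 0 = x.1 := rfl
theorem pat1 (x : ℕ × ℕ) : pat x 1 = x.2 := rfl
theorem pat2 (x : ℕ × ℕ) : pat x 2 = x.2 := rfl
theorem pat3 (x : ℕ × ℕ) : pat x 3 = x.1 := rfl
theorem pat4 (x : ℕ × ℕ) : pat x 4 = x.2 := rfl
theorem pat5 (x : ℕ × ℕ) : pat x 5 = x.1 := rfl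
theorem pat6 (x : ℕ × ℕ) : pat x 6 = x.1 := rfl
theorem pat7 (x : ℕ × ℕ) : pat x 7 = x.2 := rfl

theorem sum_comp8 {N : ℕ} (v : Fin N → Fin 8) (g : Fin 8 → ℤ) :
    ∑ k, g (v k) = ∑ t : Fin 8, ((univ.filter fun k => v k = t).card : ℤ) * g t := by
  rw [← Finset.sum_fiberwise univ v (fun k => g (v k))]
  refine Finset.sum_congr rfl fun t _ => ?_
  rw [Finset.sum_congr rfl (fun k hk => by rw [(Finset.mem_filter.mp hk).2]),
    Finset.sum_const, nsmul_eq_mul]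

theorem cnt_sum {N : ℕ} (v : Fin N → Fin 8) :
    ∑ t : Fin 8, (univ.filter fun k => v k = t).card = N := by
  rw [← Finset.card_eq_sum_card_fiberwise (f := v) (t := univ) (fun x _ => mem_univ _)]
  simp

theorem porth_forward {N : ℕ} (h4 : 4 ∣ N) (v : Fin N → Fin 8) (hP : POrth v) :
    ((univ.filter fun k => v k = 0).card, (univ.filter fun k => v k = 1).card)
        ∈ antidiagonal (N / 4) ∧
      ∀ t, (univ.filter fun k => v k = t).card =
        pat ((univ.filter fun k => v k = 0).card, (univ.filter fun k => v k = 1).card) t := by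
  set c : Fin 8 → ℕ := fun t => (univ.filter fun k => v k = t).card with hc
  have heq : ∀ i j : Fin 4, i ≠ j →
      ∑ t : Fin 8, (c t : ℤ) * (((hcol t i : ℤˣ) : ℤ) * ((hcol t j : ℤˣ) : ℤ)) = 0 := by
    intro i j hij
    rw [← sum_comp8]
    exact hP i j hij
  have h01 := heq 0 1 (by decide)
  have h02 := heq 0 2 (by decide)
  have h03 := heq 0 3 (by decide)
  have h12 := heq 1 2 (by decide)
  have h13 := heq 1 3 (by decide)
  have h23 := heq 2 3 (by decide)
  have hsum : ∑ t : Fin 8, c t = N := cnt_sum v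
  rw [Fin.sum_univ_eight] at h01 h02 h03 h12 h13 h23 hsum
  norm_num [hc0, hc1, hc2, hc3, hc4, hc5, hc6, hc7, Matrix.cons_val_two,
    Matrix.cons_val_three, Matrix.vecHead, Matrix.vecTail] at h01 h02 h03 h12 h13 h23
  have key : c 2 = c 1 ∧ c 3 = c 0 ∧ c 4 = c 1 ∧ c 5 = c 0 ∧ c 6 = c 0 ∧ c 7 = c 1 ∧
      c 0 + c 1 = N / 4 := by omega
  refine ⟨by rw [Finset.HasAntidiagonal.mem_antidiagonal]; exact key.2.2.2.2.2.2, fun t => ?_⟩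
  fin_cases t
  · exact rfl
  · exact rfl
  · exact key.1
  · exact key.2.1
  · exact key.2.2.1
  · exact key.2.2.2.1
  · exact key.2.2.2.2.1
  · exact key.2.2.2.2.2.1

theorem porth_backward {N : ℕ} (v : Fin N → Fin 8) (x : ℕ × ℕ)
    (h : ∀ t, (univ.filter fun k => v k = t).card = pat x t) : POrth v := by
  intro i j hij
  rw [sum_comp8 v (fun t => ((hcol t i : ℤˣ) : ℤ) * ((hcol t j : ℤˣ) : ℤ))]
  rw [Finset.sum_congr rfl (fun t _ => by rw [h t])]
  fin_cases i <;> fin_cases j <;>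
    first
      | exact absurd rfl hij
      | (rw [Fin.sum_univ_eight]
         norm_num [hc0, hc1, hc2, hc3, hc4, hc5, hc6, hc7,
           pat0, pat1, pat2, pat3, pat4, pat5, pat6, pat7] <;>
         ring)

theorem card_POrth {N : ℕ} (h4 : 4 ∣ N) :
    Fintype.card {v : Fin N → Fin 8 // POrth v} =
      ∑ x ∈ antidiagonal (N / 4), Nat.multinomial univ (pat x) := by
  set Φ : {v : Fin N → Fin 8 // POrth v} → ↥(antidiagonal (N / 4)) := fun v =>
    ⟨((univ.filter fun k => v.1 k = 0).card, (univ.filter fun k => v.1 k = 1).card),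
      (porth_forward h4 v.1 v.2).1⟩ with hΦ
  rw [← Fintype.card_congr (Equiv.sigmaFiberEquiv Φ), Fintype.card_sigma]
  rw [← Finset.sum_coe_sort (antidiagonal (N / 4)) (fun x => Nat.multinomial univ (pat x))]
  refine Finset.sum_congr rfl fun x _ => ?_
  have hx := mem_antidiagonal.mp x.2
  have hsum : ∑ t : Fin 8, pat x.1 t = N := by
    rw [Fin.sum_univ_eight, pat0, pat1, pat2, pat3, pat4, pat5, pat6, pat7]
    have := Nat.div_mul_cancel h4
    omega
  have step : Nat.card {w : {v : Fin N → Fin 8 // POrth v} // Φ w = x} =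
      Nat.card {f : Fin N → Fin 8 //
        ∀ b, (univ.filter fun k => f k = b).card = pat x.1 b} := by
    refine Nat.card_congr
      ⟨fun w => ⟨w.1.1, ?_⟩, fun u => ⟨⟨u.1, porth_backward u.1 x.1 u.2⟩, ?_⟩, ?_, ?_⟩
    · have h2 := (porth_forward h4 w.1.1 w.1.2).2
      have h3 : (Φ w.1).1 = x.1 := congrArg Subtype.val w.2
      intro t
      rw [h2 t]
      rw [show ((univ.filter fun k => w.1.1 k = 0).card,
        (univ.filter fun k => w.1.1 k = 1).card) = x.1 from h3]
    · apply Subtype.ext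
      show ((univ.filter fun k => u.1 k = 0).card, (univ.filter fun k => u.1 k = 1).card) = x.1
      rw [u.2 0, u.2 1, pat0, pat1]
    · intro w; apply Subtype.ext; rfl
    · intro u; rfl
  calc Fintype.card {w : {v : Fin N → Fin 8 // POrth v} // Φ w = x}
      = Nat.card {w : {v : Fin N → Fin 8 // POrth v} // Φ w = x} :=
        Nat.card_eq_fintype_card.symm
    _ = Nat.card {f : Fin N → Fin 8 //
          ∀ b, (univ.filter fun k => f k = b).card = pat x.1 b} := step
    _ = Nat.multinomial univ (pat x.1) := card_fiber_eq_multinomial N (pat x.1) hsum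

theorem stmt_2 (N : ℕ) (h4 : 4 ∣ N) :
    Nat.card {H : Matrix (Fin 4) (Fin N) ℤˣ //
        ∀ i j : Fin 4, i ≠ j → ∑ k, ((H i k : ℤ) * (H j k : ℤ)) = 0} =
      2 ^ N * ∑ x ∈ Finset.HasAntidiagonal.antidiagonal (N / 4),
        Nat.multinomial Finset.univ ![x.1, x.2, x.2, x.1, x.2, x.1, x.1, x.2] := by
  rw [Nat.card_congr (mainEquiv N).symm, Nat.card_prod]
  have h1 : Nat.card (Fin N → ℤˣ) = 2 ^ N := by
    simp [Nat.card_eq_fintype_card, Fintype.card_fun]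
  have h2 : Nat.card {v : Fin N → Fin 8 // POrth v} =
      ∑ x ∈ Finset.HasAntidiagonal.antidiagonal (N / 4),
        Nat.multinomial Finset.univ ![x.1, x.2, x.2, x.1, x.2, x.1, x.1, x.2] := by
    rw [Nat.card_eq_fintype_card]
    exact card_POrth h4
  rw [h1, h2]
end

section
/- Let q = p^k be a prime power with k ≥ 1, and let w = e^{2πi/q}. A list λ_1, …, λ_N of q-th roots of unity satisfies λ_1 + … + λ_N = 0 if and only if the multiplicity function m : ℤ/q → ℕ, m(r) = #{i : λ_i = w^r}, is periodic with period q/p, i.e., m(r) = m(r + q/p) for all r ∈ ℤ/q. -/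
theorem stmt_4 (p k q N : ℕ) (hp : p.Prime) (hk : 1 ≤ k) (hq : q = p ^ k)
    (w : ℂ) (hw : w = Complex.exp (2 * Real.pi * Complex.I / q))
    (lam : Fin N → ℂ) (hroot : ∀ i, lam i ^ q = 1)
    (m : ZMod q → ℕ)
    (hm : ∀ r : ZMod q, m r = Nat.card {i : Fin N // lam i = w ^ r.val}) :
    (∑ i, lam i = 0) ↔ ∀ r : ZMod q, m r = m (r + (q / p : ℕ)) := by
  classical
  have hp1 : 1 < p := hp.one_lt
  have hq0 : q ≠ 0 := by subst hq; positivity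
  haveI : NeZero q := ⟨hq0⟩
  set d : ℕ := p ^ (k - 1) with hd
  have hqd : q = d * p := by
    rw [hq, hd, ← pow_succ]
    congr 1
    omega
  have hdiv : q / p = d := by rw [hqd]; exact Nat.mul_div_cancel _ hp.pos
  have hd0 : 0 < d := by positivity
  have hdq : d < q := by
    rw [hqd]
    exact lt_mul_of_one_lt_right hd0 hp1
  have hζ : IsPrimitiveRoot w q := hw ▸ Complex.isPrimitiveRoot_exp q hq0
  have hwq : w ^ q = 1 := hζ.pow_eq_one
  have hpow_mod : ∀ n : ℕ, w ^ ((n : ZMod q).val) = w ^ n := by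
    intro n
    rw [ZMod.val_natCast]
    conv_rhs => rw [← Nat.div_add_mod n q]
    rw [pow_add, pow_mul, hwq, one_pow, one_mul]
  -- discrete logs
  choose e he1 he2 using fun i => hζ.eq_pow_of_pow_eq_one (hroot i)
  set φ : Fin N → ZMod q := fun i => (e i : ZMod q) with hφ
  have hφval : ∀ i, (φ i).val = e i := fun i => ZMod.val_cast_of_lt (he1 i)
  have hlam : ∀ i, lam i = w ^ (φ i).val := by
    intro i; rw [hφval]; exact (he2 i).symm
  have hmcard : ∀ r : ZMod q,
      m r = (Finset.univ.filter fun i => φ i = r).card := by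
    intro r
    rw [hm r, Nat.card_eq_fintype_card, Fintype.card_subtype]
    congr 1
    ext i
    simp only [Finset.mem_filter, Finset.mem_univ, true_and]
    rw [hlam i]
    constructor
    · intro h
      have := hζ.pow_inj (ZMod.val_lt (φ i)) (ZMod.val_lt r) h
      exact ZMod.val_injective q this
    · intro h; rw [h]
  -- the weighted sum
  set S : ℂ := ∑ r : ZMod q, (m r : ℂ) * w ^ r.val with hS
  have hsum : ∑ i, lam i = S := by
    calc ∑ i, lam i = ∑ i, w ^ (φ i).val := Finset.sum_congr rfl fun i _ => hlam i
      _ = ∑ r : ZMod q, ∑ i ∈ Finset.univ.filter (fun i => φ i = r),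
            w ^ r.val := (Finset.sum_fiberwise' Finset.univ φ (fun r => w ^ r.val)).symm
      _ = S := by
          refine Finset.sum_congr rfl fun r _ => ?_
          rw [Finset.sum_const, hmcard r, nsmul_eq_mul]
  -- function M on ℕ
  set M : ℕ → ℕ := fun n => m (n : ZMod q) with hM
  have hMval : ∀ r : ZMod q, m r = M r.val := by
    intro r
    simp only [hM]
    congr 1
    exact (ZMod.natCast_rightInverse r).symm
  have hvadd : ∀ r : ZMod q, r + (d : ZMod q) = ((r.val + d : ℕ) : ZMod q) := by
    intro r
    push_cast
    rw [ZMod.natCast_val, ZMod.cast_id]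
  rw [hsum, hdiv]
  constructor
  · -- hard direction: S = 0 → periodic
    intro hS0
    -- the polynomial f
    set f : Polynomial ℚ := ∑ n ∈ Finset.range q, Polynomial.C (M n : ℚ) * Polynomial.X ^ n
      with hf
    have hfcoeff : ∀ n, f.coeff n = if n < q then (M n : ℚ) else 0 := by
      intro n
      rw [hf, Polynomial.finset_sum_coeff]
      simp only [Polynomial.coeff_C_mul, Polynomial.coeff_X_pow, mul_ite, mul_one, mul_zero]
      rw [Finset.sum_ite_eq (Finset.range q) n (fun i => (M i : ℚ))]
      simp [Finset.mem_range]
    have haeval : Polynomial.aeval w f = S := by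
      rw [hf, map_sum, hS]
      rw [show (Finset.range q) = Finset.image ZMod.val (Finset.univ : Finset (ZMod q)) from ?_]
      · rw [Finset.sum_image (fun a _ b _ h => ZMod.val_injective q h)]
        refine Finset.sum_congr rfl fun r _ => ?_
        simp only [map_mul, map_pow, Polynomial.aeval_C, Polynomial.aeval_X]
        rw [hMval r]
        norm_num
      · ext n
        simp only [Finset.mem_range, Finset.mem_image, Finset.mem_univ, true_and]
        constructor
        · intro hn
          exact ⟨(n : ZMod q), ZMod.val_cast_of_lt hn⟩
        · rintro ⟨r, rfl⟩
          exact ZMod.val_lt r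
    have hcyc : Polynomial.cyclotomic q ℚ = minpoly ℚ w :=
      Polynomial.cyclotomic_eq_minpoly_rat hζ (Nat.pos_of_ne_zero hq0)
    have hdvd : Polynomial.cyclotomic q ℚ ∣ f := by
      rw [hcyc]
      exact minpoly.dvd ℚ w (by rw [haeval, hS0])
    obtain ⟨g, hg⟩ := hdvd
    have hcyc0 : Polynomial.cyclotomic q ℚ ≠ 0 :=
      (Polynomial.cyclotomic.monic q ℚ).ne_zero
    -- coefficients of g vanish from degree d on
    have hgbound : ∀ a, d ≤ a → g.coeff a = 0 := by
      intro a ha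
      rcases eq_or_ne g 0 with h0 | h0
      · simp [h0]
      apply Polynomial.coeff_eq_zero_of_natDegree_lt
      have hf0 : f ≠ 0 := by
        rw [hg]
        exact mul_ne_zero hcyc0 h0
      have hdeg : f.natDegree = (Polynomial.cyclotomic q ℚ).natDegree + g.natDegree := by
        rw [hg, Polynomial.natDegree_mul hcyc0 h0]
      have hΦdeg : (Polynomial.cyclotomic q ℚ).natDegree = d * (p - 1) := by
        rw [Polynomial.natDegree_cyclotomic, hq, Nat.totient_prime_pow hp (by omega), hd]
      have hfd : f.natDegree < q := by
        by_contra hc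
        push_neg at hc
        have := Polynomial.leadingCoeff_ne_zero.mpr hf0
        rw [Polynomial.leadingCoeff, hfcoeff] at this
        simp [Nat.not_lt.mpr hc] at this
      have hnd : g.natDegree < d := by
        rw [hdeg, hΦdeg] at hfd
        have h1 : d * (p - 1) + d = d * p := by
          have : p - 1 + 1 = p := Nat.succ_pred_eq_of_pos hp.pos
          calc d * (p - 1) + d = d * (p - 1 + 1) := by ring
            _ = d * p := by rw [this]
        omega
      omega
    -- cyclotomic as geometric sum
    have hΦ : Polynomial.cyclotomic q ℚ = ∑ i ∈ Finset.range p, (Polynomial.X : Polynomial ℚ) ^ (d * i) := by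
      have hq' : q = p ^ ((k - 1) + 1) := by rw [hq]; congr 1; omega
      rw [hq', Polynomial.cyclotomic_prime_pow_eq_geom_sum hp]
      refine Finset.sum_congr rfl fun i _ => ?_
      rw [← pow_mul, hd]
    -- key coefficient identity
    have hkey : ∀ s < d, ∀ j < p, (M (s + j * d) : ℚ) = g.coeff s := by
      intro s hs j hj
      have hlt : s + j * d < q := by
        have h1 : (j + 1) * d ≤ p * d := Nat.mul_le_mul_right d (by omega)
        have h2 : (j + 1) * d = j * d + d := by ring
        have h3 : p * d = q := by rw [hqd]; ring
        omega
      have h1 : f.coeff (s + j * d) = (M (s + j * d) : ℚ) := by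
        rw [hfcoeff, if_pos hlt]
      have h2 : f.coeff (s + j * d) = g.coeff s := by
        rw [hg, hΦ, Finset.sum_mul, Polynomial.finset_sum_coeff]
        have hterm : ∀ i, ((Polynomial.X : Polynomial ℚ) ^ (d * i) * g).coeff (s + j * d)
            = if d * i ≤ s + j * d then g.coeff (s + j * d - d * i) else 0 := by
          intro i
          rw [mul_comm ((Polynomial.X : Polynomial ℚ) ^ (d * i)) g,
            Polynomial.coeff_mul_X_pow']
        rw [Finset.sum_congr rfl fun i _ => hterm i]
        rw [Finset.sum_eq_single_of_mem j (Finset.mem_range.mpr hj)]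
        · have hj1 : d * j ≤ s + j * d := by
            have : d * j = j * d := mul_comm d j
            omega
          rw [if_pos hj1]
          congr 1
          have : d * j = j * d := mul_comm d j
          omega
        · intro i _ hij
          split_ifs with hi
          · apply hgbound
            have hcomm : d * j = j * d := mul_comm d j
            rcases lt_or_gt_of_ne hij with hlt' | hgt'
            · -- i < j
              have : d * (i + 1) ≤ d * j := Nat.mul_le_mul_left d (by omega)
              have h4 : d * (i + 1) = d * i + d := by ring
              omega
            · -- i > j
              have : d * (j + 1) ≤ d * i := Nat.mul_le_mul_left d (by omega)
              have h4 : d * (j + 1) = d * j + d := by ring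
              omega
          · rfl
      have := h1.symm.trans h2
      exact this
    have hMeq : ∀ s < d, ∀ j < p, M (s + j * d) = M s := by
      intro s hs j hj
      have h1 := hkey s hs j hj
      have h2 := hkey s hs 0 (by omega)
      simp only [zero_mul, add_zero] at h2
      exact_mod_cast h1.trans h2.symm
    intro r
    set n := r.val with hn
    have hnq : n < q := ZMod.val_lt r
    set s := n % d with hs'
    set j := n / d with hj'
    have hsd : s < d := Nat.mod_lt _ hd0
    have hnsj : n = s + j * d := (Nat.mod_add_div' n d).symm
    have hjp : j < p := by
      rw [hj']
      rw [Nat.div_lt_iff_lt_mul hd0]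
      rw [hqd] at hnq
      have : p * d = d * p := mul_comm p d
      omega
    have e1 : m r = M s := by
      rw [hMval r, ← hn, hnsj]
      exact hMeq s hsd j hjp
    have e2 : m (r + (d : ZMod q)) = M s := by
      rw [hvadd r]
      show M (n + d) = M s
      rcases Nat.lt_or_ge (j + 1) p with hjq | hjq
      · have hnd' : n + d = s + (j + 1) * d := by
          rw [hnsj]; ring
        rw [hnd']
        exact hMeq s hsd (j + 1) hjq
      · -- j = p - 1, wrap around
        have hjp1 : j + 1 = p := by omega
        have hnd' : n + d = s + q := by
          have h5 : j * d + d = (j + 1) * d := by ring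
          have h6 : (j + 1) * d = d * p := by rw [hjp1]; ring
          omega
        have hcast : ((n + d : ℕ) : ZMod q) = ((s : ℕ) : ZMod q) := by
          rw [hnd']
          push_cast [ZMod.natCast_self]
          ring
        simp only [hM]
        rw [hcast]
    rw [e1, e2]
  · -- easy direction: periodic → S = 0
    intro hper
    have hstep : S = w ^ d * S := by
      have hre := Fintype.sum_equiv (Equiv.addRight (d : ZMod q))
        (fun r => (m (r + (d : ZMod q)) : ℂ) * w ^ (r + (d : ZMod q)).val)
        (fun r => (m r : ℂ) * w ^ r.val) (fun r => rfl)
      calc S = ∑ r : ZMod q, (m (r + (d : ZMod q)) : ℂ) * w ^ (r + (d : ZMod q)).val :=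
            hre.symm
        _ = ∑ r : ZMod q, w ^ d * ((m r : ℂ) * w ^ r.val) := by
            refine Finset.sum_congr rfl fun r _ => ?_
            rw [← hper r, hvadd r, hpow_mod, pow_add]
            ring
        _ = w ^ d * S := (Finset.mul_sum _ _ _).symm
    have hwd : w ^ d ≠ 1 := hζ.pow_ne_one_of_pos_of_lt hd0.ne' hdq
    have hz : (1 - w ^ d) * S = 0 := by
      rw [sub_mul, one_mul, ← hstep, sub_self]
    rcases mul_eq_zero.mp hz with h | h
    · exact absurd (sub_eq_zero.mp h).symm hwd
    · exact h
end

section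
/- Let p be prime and N ∈ pℕ. The number of 2×N matrices H with entries in the group μ_p of p-th roots of unity, whose first row consists entirely of 1s and whose two rows are orthogonal (Σ_j H_{1j} · conj(H_{2j}) = 0), equals the multinomial coefficient N! / ((N/p)!)^p. If p ∤ N, this number is 0. -/
open Finset Polynomial

lemma vanishing_sum_const {p : ℕ} (hp : p.Prime) {ζ : ℂ} (hζ : IsPrimitiveRoot ζ p)
    (a : ℕ → ℕ) (h : ∑ i ∈ range p, (a i : ℂ) * ζ ^ i = 0) :
    ∀ i < p, ∀ j < p, a i = a j := by
  set P : ℚ[X] := ∑ i ∈ range p, C (a i : ℚ) * X ^ i with hP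
  have hcoeff : ∀ k < p, P.coeff k = (a k : ℚ) := by
    intro k hk
    rw [hP, finset_sum_coeff]
    rw [Finset.sum_eq_single k]
    · simp
    · intro b _ hbk; simp [coeff_C_mul, coeff_X_pow, hbk, Ne.symm hbk]
    · intro hk'; exact absurd (mem_range.mpr hk) hk'
  have haev : aeval ζ P = 0 := by
    rw [hP]
    simp only [map_sum, map_mul, map_pow, aeval_C, aeval_X]
    simpa using h
  have hdvd : cyclotomic p ℚ ∣ P := by
    rw [cyclotomic_eq_minpoly_rat hζ hp.pos]
    exact minpoly.dvd ℚ ζ haev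
  have hdegP : P.natDegree ≤ p - 1 := by
    apply Polynomial.natDegree_sum_le_of_forall_le
    intro i hi
    apply le_trans (natDegree_C_mul_le _ _)
    simpa using Nat.le_pred_of_lt (mem_range.mp hi)
  have hdegC : (cyclotomic p ℚ).natDegree = p - 1 := by
    rw [natDegree_cyclotomic, Nat.totient_prime hp]
  obtain ⟨Q, hQ⟩ := hdvd
  have hcoeffC : ∀ k < p, (cyclotomic p ℚ).coeff k = 1 := by
    intro k hk
    haveI : Fact p.Prime := ⟨hp⟩
    rw [cyclotomic_prime, finset_sum_coeff]
    rw [Finset.sum_eq_single k]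
    · simp
    · intro b _ hbk; simp [coeff_X_pow, hbk, Ne.symm hbk]
    · intro hk'; exact absurd (mem_range.mpr hk) hk'
  have hconst : ∀ k < p, P.coeff k = Q.coeff 0 := by
    by_cases hQ0 : Q = 0
    · subst hQ0
      intro k hk
      simp [hQ]
    · have hdeg : Q.natDegree = 0 := by
        have h1 : P.natDegree = (cyclotomic p ℚ).natDegree + Q.natDegree := by
          rw [hQ, natDegree_mul (cyclotomic_ne_zero p ℚ) hQ0]
        omega
      obtain ⟨q, rfl⟩ := natDegree_eq_zero.mp hdeg
      intro k hk
      rw [hQ, coeff_mul_C, hcoeffC k hk, one_mul, coeff_C_zero]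
  intro i hi j hj
  have := (hcoeff i hi).symm.trans ((hconst i hi).trans ((hconst j hj).symm.trans (hcoeff j hj)))
  exact_mod_cast this

lemma sum_zmod_char {p N : ℕ} (hp : p.Prime) {ζ : ℂ} (hζ : IsPrimitiveRoot ζ p)
    (k : Fin N → ZMod p) :
    haveI : NeZero p := ⟨hp.ne_zero⟩
    ((∑ j, ζ ^ (k j).val = 0) ↔
      (p ∣ N ∧ ∀ i : ZMod p, Nat.card {j // k j = i} = N / p)) := by
  haveI : NeZero p := ⟨hp.ne_zero⟩
  classical
  set c : ZMod p → ℕ := fun i => (univ.filter (fun j => k j = i)).card with hc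
  have hcard : ∀ i, Nat.card {j // k j = i} = c i := by
    intro i; rw [Nat.card_eq_fintype_card, Fintype.card_subtype]
  have hsumc : ∑ i, c i = N := by
    show ∑ i : ZMod p, (univ.filter (fun j => k j = i)).card = N
    have h1 : (univ : Finset (Fin N)).card = ∑ i : ZMod p, (univ.filter fun j => k j = i).card :=
      Finset.card_eq_sum_card_fiberwise (fun j _ => Finset.mem_univ (k j))
    simpa using h1.symm
  have hgroup : ∑ j, ζ ^ (k j).val = ∑ i : ZMod p, (c i : ℂ) * ζ ^ i.val := by
    rw [← Finset.sum_fiberwise univ k (fun j => ζ ^ (k j).val)]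
    refine Finset.sum_congr rfl fun i _ => ?_
    rw [Finset.sum_congr rfl (fun j hj => by
      rw [(Finset.mem_filter.mp hj).2]), Finset.sum_const, nsmul_eq_mul]
  have hrange : (∑ i : ZMod p, (c i : ℂ) * ζ ^ i.val)
      = ∑ m ∈ range p, ((c (m : ZMod p) : ℂ)) * ζ ^ m := by
    refine Finset.sum_nbij' (fun i => i.val) (fun m => (m : ZMod p)) ?_ ?_ ?_ ?_ ?_
    · intro i _; exact Finset.mem_range.mpr (ZMod.val_lt i)
    · intro m _; exact Finset.mem_univ _
    · intro i _; simp [ZMod.natCast_val, ZMod.cast_id]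
    · intro m hm; exact ZMod.val_cast_of_lt (Finset.mem_range.mp hm)
    · intro i _; simp [ZMod.natCast_val, ZMod.cast_id]
  constructor
  · intro h0
    rw [hgroup, hrange] at h0
    have hall := vanishing_sum_const hp hζ (fun m => c (m : ZMod p)) h0
    have hconst : ∀ i : ZMod p, c i = c 0 := by
      intro i
      have := hall i.val (ZMod.val_lt i) 0 hp.pos
      simpa [ZMod.natCast_val, ZMod.cast_id] using this
    have hpc : p * c 0 = N := by
      rw [← hsumc, Finset.sum_congr rfl (fun i _ => hconst i), Finset.sum_const,
        Finset.card_univ, ZMod.card, smul_eq_mul]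
    refine ⟨⟨c 0, hpc.symm⟩, fun i => ?_⟩
    rw [hcard, hconst i, ← hpc, Nat.mul_div_cancel_left _ hp.pos]
  · rintro ⟨hdvd, hfib⟩
    have hc' : ∀ i, c i = N / p := fun i => by rw [← hcard, hfib]
    have hzeta : ∑ i : ZMod p, ζ ^ i.val = 0 := by
      have he : ∑ i : ZMod p, ζ ^ i.val = ∑ m ∈ range p, ζ ^ m := by
        refine Finset.sum_nbij' (fun i => i.val) (fun m => (m : ZMod p)) ?_ ?_ ?_ ?_ ?_
        · intro i _; exact Finset.mem_range.mpr (ZMod.val_lt i)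
        · intro m _; exact Finset.mem_univ _
        · intro i _; simp [ZMod.natCast_val, ZMod.cast_id]
        · intro m hm; exact ZMod.val_cast_of_lt (Finset.mem_range.mp hm)
        · intro i _; rfl
      rw [he]; exact hζ.geom_sum_eq_zero hp.one_lt
    rw [hgroup, Finset.sum_congr rfl (fun i _ => by rw [hc' i]), ← Finset.mul_sum,
      hzeta, mul_zero]

def fstFiber {ι : Type*} (β : ι → Type*) (i : ι) : {x : Σ j, β j // x.1 = i} ≃ β i where
  toFun x := cast (congrArg β x.2) x.1.2
  invFun b := ⟨⟨i, b⟩, rfl⟩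
  left_inv := by rintro ⟨⟨j, b⟩, rfl⟩; rfl
  right_inv b := rfl

lemma exists_perm_comp {α ι : Type*} [Fintype α] [DecidableEq α] [DecidableEq ι]
    (f0 g : α → ι) (h : ∀ i, Nat.card {a // g a = i} = Nat.card {a // f0 a = i}) :
    ∃ τ : Equiv.Perm α, f0 ∘ τ = g := by
  have eFib : ∀ i, {a // g a = i} ≃ {a // f0 a = i} := fun i =>
    Fintype.equivOfCardEq (by have := h i; simpa [Nat.card_eq_fintype_card] using this)
  refine ⟨(Equiv.sigmaFiberEquiv g).symm.trans
    ((Equiv.sigmaCongrRight eFib).trans (Equiv.sigmaFiberEquiv f0)), ?_⟩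
  funext a
  simp [Equiv.sigmaFiberEquiv, Equiv.sigmaCongrRight]
  exact (eFib (g a) ⟨a, rfl⟩).2

lemma fiber_count {α ι : Type*} [Fintype α] [Fintype ι] [DecidableEq α] [DecidableEq ι]
    (c : ι → ℕ) (hc : ∑ i, c i = Fintype.card α) :
    Nat.card {g : α → ι // ∀ i, Nat.card {a // g a = i} = c i} * ∏ i, (c i).factorial
      = (Fintype.card α).factorial := by
  classical
  have hcard : Fintype.card α = Fintype.card (Σ i, Fin (c i)) := by
    simp [Fintype.card_sigma, hc]
  let e : α ≃ Σ i, Fin (c i) := Fintype.equivOfCardEq hcard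
  let f0 : α → ι := fun a => (e a).1
  have hf0 : ∀ i, Nat.card {a // f0 a = i} = c i := by
    intro i
    have : {a // f0 a = i} ≃ Fin (c i) :=
      (e.subtypeEquiv (fun a => Iff.rfl)).trans (fstFiber _ i)
    rw [Nat.card_congr this]; simp
  set T := {g : α → ι // ∀ i, Nat.card {a // g a = i} = c i} with hT
  have compFib : ∀ (σ : Equiv.Perm α) i,
      Nat.card {a // (f0 ∘ σ) a = i} = c i := by
    intro σ i
    simp only [Function.comp_apply]
    rw [Nat.card_congr ((σ.subtypeEquiv (fun a => Iff.rfl)) :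
      {a // f0 (σ a) = i} ≃ {b // f0 b = i}), hf0]
  let Φ : Equiv.Perm α → T := fun σ => ⟨f0 ∘ σ, compFib σ⟩
  have key : ∀ g : T, Nat.card {σ // Φ σ = g} = ∏ i, (c i).factorial := by
    intro g
    obtain ⟨τ, hτ⟩ := exists_perm_comp f0 g.1 (fun i => by rw [g.2 i, hf0])
    have hftau : ∀ a, f0 (τ a) = g.1 a := fun a => congrFun hτ a
    have hgsymm : ∀ a, g.1 (τ.symm a) = f0 a := by
      intro a; rw [← hftau (τ.symm a), Equiv.apply_symm_apply]
    have E : {σ // Φ σ = g} ≃ {σ : Equiv.Perm α // g.1 ∘ σ = g.1} := by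
      refine ⟨fun σ => ⟨σ.1.trans τ.symm, ?_⟩, fun σ => ⟨σ.1.trans τ, ?_⟩, ?_, ?_⟩
      · funext a
        have h1 : f0 ∘ σ.1 = g.1 := congrArg Subtype.val σ.2
        simp only [Function.comp_apply, Equiv.trans_apply]
        rw [hgsymm]
        exact congrFun h1 a
      · have h1 : g.1 ∘ σ.1 = g.1 := σ.2
        apply Subtype.ext
        funext a
        simp only [Φ, Function.comp_apply, Equiv.trans_apply]
        rw [hftau]
        exact congrFun h1 a
      · intro σ; apply Subtype.ext; ext a; simp
      · intro σ; apply Subtype.ext; ext a; simp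
    rw [Nat.card_congr E, Nat.card_eq_fintype_card, DomMulAct.stabilizer_card g.1]
    exact Finset.prod_congr rfl fun i _ => by rw [← Nat.card_eq_fintype_card, g.2 i]
  have total : Nat.card (Equiv.Perm α) = Nat.card (Σ g : T, {σ // Φ σ = g}) :=
    (Nat.card_congr (Equiv.sigmaFiberEquiv Φ)).symm
  rw [Nat.card_eq_fintype_card, Fintype.card_perm] at total
  have total2 : Nat.card ((g : T) × {σ // Φ σ = g}) = Nat.card T * ∏ i, (c i).factorial := by
    rw [Nat.card_eq_fintype_card, Fintype.card_sigma]
    simp_rw [← Nat.card_eq_fintype_card, key]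
    rw [Finset.sum_const, Finset.card_univ, smul_eq_mul, Nat.card_eq_fintype_card]
  rw [total, total2]

section final
variable (p N : ℕ) (hp : p.Prime) {ζ : ℂ} (hζ : IsPrimitiveRoot ζ p)

noncomputable def rootEquiv (hp : p.Prime) (hζ : IsPrimitiveRoot ζ p) :
    ZMod p ≃ {z : ℂ // z ^ p = 1} := by
  haveI : NeZero p := ⟨hp.ne_zero⟩
  refine Equiv.ofBijective (fun k => ⟨ζ ^ k.val, by
    rw [← pow_mul, mul_comm, pow_mul, hζ.pow_eq_one, one_pow]⟩) ⟨?_, ?_⟩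
  · intro a b hab
    have := hζ.pow_inj (ZMod.val_lt a) (ZMod.val_lt b) (congrArg Subtype.val hab)
    exact ZMod.val_injective p this
  · rintro ⟨z, hz⟩
    obtain ⟨i, hi, rfl⟩ := hζ.eq_pow_of_pow_eq_one hz
    exact ⟨(i : ZMod p), Subtype.ext (by simp [ZMod.val_cast_of_lt hi])⟩

noncomputable def matrixEquiv (hp : p.Prime) (hζ : IsPrimitiveRoot ζ p) :
    {H : Matrix (Fin 2) (Fin N) ℂ //
        (∀ i j, H i j ^ p = 1) ∧ (∀ j, H 0 j = 1) ∧
        ∑ j, H 0 j * (starRingEnd ℂ) (H 1 j) = 0} ≃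
    {k : Fin N → ZMod p // ∑ j, ζ ^ (k j).val = 0} where
  toFun H := ⟨fun j => (rootEquiv p hp hζ).symm ⟨H.1 1 j, H.2.1 1 j⟩, by
    have h1 : ∀ j, ζ ^ (((rootEquiv p hp hζ).symm ⟨H.1 1 j, H.2.1 1 j⟩).val) = H.1 1 j := by
      intro j
      exact congrArg Subtype.val ((rootEquiv p hp hζ).apply_symm_apply ⟨H.1 1 j, H.2.1 1 j⟩)
    rw [Finset.sum_congr rfl fun j _ => h1 j]
    have h2 := H.2.2.2
    simp only [H.2.2.1, one_mul] at h2
    have h3 := congrArg (starRingEnd ℂ) h2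
    simpa using h3⟩
  invFun k := ⟨Matrix.of (fun i j => if i = 0 then 1 else ζ ^ (k.1 j).val), by
    refine ⟨fun i j => ?_, fun j => by simp, ?_⟩
    · by_cases hi : i = 0
      · simp [hi]
      · simp only [Matrix.of_apply, if_neg hi]
        rw [← pow_mul, mul_comm, pow_mul, hζ.pow_eq_one, one_pow]
    · have : (1 : Fin 2) ≠ 0 := by decide
      simp only [Matrix.of_apply, if_neg this, if_pos rfl, one_mul]
      have h3 := congrArg (starRingEnd ℂ) k.2
      simpa using h3⟩
  left_inv H := by
    apply Subtype.ext
    ext i j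
    by_cases hi : i = 0
    · simp [hi, (H.2.2.1 j).symm]
    · have hi1 : i = 1 := by omega
      simp only [Matrix.of_apply, if_neg hi, hi1]
      exact congrArg Subtype.val ((rootEquiv p hp hζ).apply_symm_apply ⟨H.1 1 j, H.2.1 1 j⟩)
  right_inv k := by
    apply Subtype.ext
    funext j
    have : (1 : Fin 2) ≠ 0 := by decide
    simp only [Matrix.of_apply, if_neg this]
    have : (⟨ζ ^ (k.1 j).val, _⟩ : {z : ℂ // z ^ p = 1}) = rootEquiv p hp hζ (k.1 j) := rfl
    rw [show (⟨ζ ^ (k.1 j).val, by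
        rw [← pow_mul, mul_comm, pow_mul, hζ.pow_eq_one, one_pow]⟩ : {z : ℂ // z ^ p = 1})
      = rootEquiv p hp hζ (k.1 j) from rfl]
    exact (rootEquiv p hp hζ).symm_apply_apply _

end final

theorem stmt_5 (p N : ℕ) (hp : p.Prime) :
    (p ∣ N →
      Nat.card {H : Matrix (Fin 2) (Fin N) ℂ //
          (∀ i j, H i j ^ p = 1) ∧ (∀ j, H 0 j = 1) ∧
          ∑ j, H 0 j * (starRingEnd ℂ) (H 1 j) = 0} =
        N.factorial / (N / p).factorial ^ p) ∧
    (¬ p ∣ N →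
      Nat.card {H : Matrix (Fin 2) (Fin N) ℂ //
          (∀ i j, H i j ^ p = 1) ∧ (∀ j, H 0 j = 1) ∧
          ∑ j, H 0 j * (starRingEnd ℂ) (H 1 j) = 0} = 0) := by
  classical
  haveI : NeZero p := ⟨hp.ne_zero⟩
  have hζ := Complex.isPrimitiveRoot_exp p hp.ne_zero
  set ζ := Complex.exp (2 * Real.pi * Complex.I / p) with hzeta
  have hEq := Nat.card_congr (matrixEquiv p N hp hζ)
  constructor
  · intro hdvd
    rw [hEq]
    have eq2 : {k : Fin N → ZMod p // ∑ j, ζ ^ (k j).val = 0} ≃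
        {k : Fin N → ZMod p // ∀ i : ZMod p, Nat.card {j // k j = i} = N / p} :=
      Equiv.subtypeEquivRight (fun k => by
        rw [sum_zmod_char hp hζ k]
        exact ⟨fun h => h.2, fun h => ⟨hdvd, h⟩⟩)
    rw [Nat.card_congr eq2]
    have hc := fiber_count (α := Fin N) (fun _ : ZMod p => N / p)
      (by simp [ZMod.card, Nat.mul_div_cancel' hdvd])
    rw [Finset.prod_const, Finset.card_univ, ZMod.card, Fintype.card_fin] at hc
    have hpos : 0 < (N / p).factorial ^ p := pow_pos (Nat.factorial_pos _) p
    exact (Nat.div_eq_of_eq_mul_left hpos hc.symm).symm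
  · intro hndvd
    rw [hEq]
    haveI : IsEmpty {k : Fin N → ZMod p // ∑ j, ζ ^ (k j).val = 0} :=
      ⟨fun k => hndvd ((sum_zmod_char hp hζ k.1).mp k.2).1⟩
    exact Nat.card_of_isEmpty
end

section
/- Let q = p^k be a prime power and N ∈ pℕ. The number of 2×N matrices H with entries in μ_q whose first row is all 1s and whose rows are orthogonal equals Σ_{a_1+…+a_{q/p}=N/p} N! / ∏_{i=1}^{q/p} (a_i!)^p, the sum being over tuples of nonnegative integers a_1, …, a_{q/p} summing to N/p. -/
open Finset Polynomial


def fiberFstEquiv {ι : Type*} (β : ι → Type*) (i : ι) : {x : Σ j, β j // x.1 = i} ≃ β i where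
  toFun := fun ⟨⟨j, b⟩, h⟩ => h ▸ b
  invFun := fun b => ⟨⟨i, b⟩, rfl⟩
  left_inv := fun ⟨⟨j, b⟩, h⟩ => by subst h; rfl
  right_inv := fun b => rfl

lemma exists_fun_with_fibers {α ι : Type*} [Fintype α] [DecidableEq α] [Fintype ι] [DecidableEq ι]
    (m : ι → ℕ) (hm : ∑ i, m i = Fintype.card α) :
    ∃ f : α → ι, ∀ i, Fintype.card {a // f a = i} = m i := by
  have hc : Fintype.card α = Fintype.card (Σ i, Fin (m i)) := by
    simp [Fintype.card_sigma, hm]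
  obtain ⟨e⟩ : Nonempty (α ≃ Σ i, Fin (m i)) := ⟨Fintype.equivOfCardEq hc⟩
  refine ⟨fun a => (e a).1, fun i => ?_⟩
  have : {a // (e a).1 = i} ≃ Fin (m i) :=
    (e.subtypeEquiv fun a => Iff.rfl).trans (fiberFstEquiv (fun j => Fin (m j)) i)
  simp [Fintype.card_congr this]

lemma exists_perm_of_fibers {α ι : Type*} [Fintype α] [DecidableEq α] [Fintype ι] [DecidableEq ι]
    (f g : α → ι) (h : ∀ i, Fintype.card {a // f a = i} = Fintype.card {a // g a = i}) :
    ∃ σ : Equiv.Perm α, g ∘ σ = f := by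
  have e : ∀ i, {a // f a = i} ≃ {a // g a = i} := fun i => Fintype.equivOfCardEq (h i)
  refine ⟨((Equiv.sigmaFiberEquiv f).symm.trans ((Equiv.sigmaCongrRight e).trans
    (Equiv.sigmaFiberEquiv g))), ?_⟩
  funext a
  simp only [Function.comp_apply, Equiv.trans_apply]
  have h1 : (Equiv.sigmaFiberEquiv f).symm a = ⟨f a, ⟨a, rfl⟩⟩ := rfl
  rw [h1]
  exact (e (f a) ⟨a, rfl⟩).2

lemma card_fiber_count {α ι : Type*} [Fintype α] [DecidableEq α] [Fintype ι] [DecidableEq ι]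
    (m : ι → ℕ) (hm : ∑ i, m i = Fintype.card α) :
    Nat.card {f : α → ι // ∀ i, Fintype.card {a // f a = i} = m i}
      = (Fintype.card α).factorial / ∏ i, (m i).factorial := by
  classical
  obtain ⟨f₀, hf₀⟩ := exists_fun_with_fibers m hm
  set S := {f : α → ι // ∀ i, Fintype.card {a // f a = i} = m i} with hS
  have key : Fintype.card (Equiv.Perm α) = Nat.card S * ∏ i, (m i).factorial := by
    have hg : ∀ σ : Equiv.Perm α, ∀ i, Fintype.card {a // (f₀ ∘ σ) a = i} = m i := by
      intro σ i
      rw [← hf₀ i]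
      exact Fintype.card_congr (σ.subtypeEquiv fun a => Iff.rfl)
    set g : Equiv.Perm α → S := fun σ => ⟨f₀ ∘ σ, hg σ⟩ with hgdef
    have E : Equiv.Perm α ≃ Σ v : S, {σ : Equiv.Perm α // g σ = v} :=
      (Equiv.sigmaFiberEquiv g).symm
    have Efib : ∀ v : S, {σ : Equiv.Perm α // g σ = v} ≃ {σ : Equiv.Perm α // f₀ ∘ σ = v.1} :=
      fun v => Equiv.subtypeEquivRight fun σ => by
        rw [hgdef]; exact ⟨fun h => by rw [← h], fun h => Subtype.ext h⟩
    have hfib : ∀ v : S, Nat.card {σ : Equiv.Perm α // f₀ ∘ σ = v.1}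
        = ∏ i, (m i).factorial := by
      rintro ⟨v, hv⟩
      simp only []
      obtain ⟨σ₁, hσ₁⟩ := exists_perm_of_fibers v f₀ (fun i => by rw [hv i, hf₀ i])
      have E2 : {σ : Equiv.Perm α // f₀ ∘ σ = v} ≃ {τ : Equiv.Perm α // f₀ ∘ τ = f₀} := by
        refine (Equiv.mulRight σ₁⁻¹).subtypeEquiv fun σ => ?_
        constructor
        · intro h; funext a
          simp only [Equiv.coe_mulRight, Equiv.Perm.mul_apply, Function.comp_apply]
          rw [show f₀ (σ (σ₁⁻¹ a)) = v (σ₁⁻¹ a) from congrFun h _, ← congrFun hσ₁ (σ₁⁻¹ a)]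
          simp
        · intro h; funext a
          have := congrFun h (σ₁ a)
          simp only [Equiv.coe_mulRight, Equiv.Perm.mul_apply, Function.comp_apply,
            Equiv.Perm.inv_def, Equiv.symm_apply_apply] at this
          rw [Function.comp_apply, this, ← congrFun hσ₁ a]; rfl
      rw [Nat.card_congr E2, Nat.card_eq_fintype_card, DomMulAct.stabilizer_card]
      exact Finset.prod_congr rfl fun i _ => by rw [hf₀ i]
    rw [← Nat.card_eq_fintype_card, Nat.card_congr E, Nat.card_eq_fintype_card,
      Fintype.card_sigma]
    simp only [← Nat.card_eq_fintype_card]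
    rw [Finset.sum_congr rfl fun x _ => (Nat.card_congr (Efib x)).trans (hfib x)]
    simp [Finset.sum_const, Nat.card_eq_fintype_card, mul_comm]
  have hpos : 0 < ∏ i, (m i).factorial := Finset.prod_pos fun i _ => Nat.factorial_pos _
  rw [Fintype.card_perm] at key
  rw [key, Nat.mul_div_cancel _ hpos]

lemma K2 (p k q : ℕ) (hp : p.Prime) (hk : 1 ≤ k) (hq : q = p ^ k) {ζ : ℂ}
    (hζ : IsPrimitiveRoot ζ q) (m : Fin q → ℕ) :
    ∑ c, (m c : ℂ) * ζ ^ (c : ℕ) = 0 ↔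
      ∃ a : ℕ → ℕ, ∀ c : Fin q, m c = a ((c : ℕ) % p ^ (k - 1)) := by
  subst hq
  have hp2 := hp.two_le
  set r := p ^ (k - 1) with hr
  have hrpos : 0 < r := pow_pos hp.pos _
  have hqr : p ^ k = p * r := by
    rw [hr, ← pow_succ']
    congr 1
    omega
  have hζr : IsPrimitiveRoot (ζ ^ r) p := hζ.pow (pow_pos hp.pos _)
    (by rw [hqr, mul_comm])
  constructor
  · intro hsum
    set P : ℚ[X] := ∑ c : Fin (p ^ k), C (m c : ℚ) * X ^ (c : ℕ) with hP
    have hPcoeff : ∀ c : Fin (p ^ k), P.coeff (c : ℕ) = (m c : ℚ) := by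
      intro c
      rw [hP, finset_sum_coeff, Finset.sum_eq_single c]
      · rw [coeff_C_mul, coeff_X_pow, if_pos rfl, mul_one]
      · intro c' _ hne
        rw [coeff_C_mul, coeff_X_pow, if_neg (fun h => hne (Fin.ext h.symm)), mul_zero]
      · exact fun h => absurd (Finset.mem_univ c) h
    have hPdeg : P.natDegree ≤ p ^ k - 1 := by
      apply Polynomial.natDegree_sum_le_of_forall_le
      intro c _
      exact le_trans (natDegree_C_mul_X_pow_le _ _) (by omega)
    have haev : aeval ζ P = 0 := by
      rw [hP, map_sum, ← hsum]
      refine Finset.sum_congr rfl fun c _ => ?_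
      simp
    have hdvd : cyclotomic (p ^ k) ℚ ∣ P := by
      rw [cyclotomic_eq_minpoly_rat hζ (pow_pos hp.pos _)]
      exact minpoly.dvd ℚ ζ haev
    obtain ⟨g, hg⟩ := hdvd
    by_cases hP0 : P = 0
    · refine ⟨fun _ => 0, fun c => ?_⟩
      have := hPcoeff c
      rw [hP0] at this
      simpa using this.symm
    have hg0 : g ≠ 0 := fun h => hP0 (by rw [hg, h, mul_zero])
    have hcyc : cyclotomic (p ^ k) ℚ = ∑ i ∈ Finset.range p, (X ^ r) ^ i := by
      have := cyclotomic_prime_pow_eq_geom_sum (R := ℚ) (p := p) (n := k - 1) hp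
      rw [show k - 1 + 1 = k by omega] at this
      rw [this, hr]
    have hcycdeg : (cyclotomic (p ^ k) ℚ).natDegree = (p - 1) * r := by
      rw [natDegree_cyclotomic, Nat.totient_prime_pow hp (by omega), mul_comm]
    have hgdeg : g.natDegree < r := by
      have hnd := natDegree_mul (cyclotomic_ne_zero (p ^ k) ℚ) hg0
      rw [← hg, hcycdeg] at hnd
      have hPdeg' : P.natDegree ≤ p * r - 1 := by rw [← hqr]; exact hPdeg
      have h4 : (p - 1) * r + r = p * r := by
        rw [Nat.sub_mul, one_mul, Nat.sub_add_cancel]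
        calc r = 1 * r := (one_mul r).symm
        _ ≤ p * r := Nat.mul_le_mul_right r hp.pos
      omega
    have hcoe : ∀ c : Fin (p ^ k), (m c : ℚ) = g.coeff ((c : ℕ) % r) := by
      intro c
      have hlt : (c : ℕ) < p * r := by rw [← hqr]; exact c.2
      have hdiv : (c : ℕ) / r < p := Nat.div_lt_iff_lt_mul hrpos |>.mpr (by omega)
      rw [← hPcoeff c, hg, hcyc, Finset.sum_mul, finset_sum_coeff]
      rw [Finset.sum_eq_single ((c : ℕ) / r)]
      · rw [← pow_mul]
        have hkey := coeff_X_pow_mul g (r * ((c : ℕ) / r)) ((c : ℕ) % r)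
        rw [show (c : ℕ) % r + r * ((c : ℕ) / r) = (c : ℕ) from Nat.mod_add_div _ _] at hkey
        exact hkey
      · intro i hi hne
        rw [← pow_mul, mul_comm, coeff_mul_X_pow']
        rcases lt_or_gt_of_ne hne with h | h
        · have h1 : r * (i + 1) ≤ r * ((c : ℕ) / r) := Nat.mul_le_mul_left _ (by omega)
          have h2 : (c : ℕ) / r * r ≤ (c : ℕ) := Nat.div_mul_le_self _ _
          have h3 : r * (i + 1) = r * i + r := by ring
          have h5 : r * ((c : ℕ) / r) = (c : ℕ) / r * r := mul_comm _ _
          rw [if_pos (by omega)]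
          exact coeff_eq_zero_of_natDegree_lt (by omega)
        · have h1 : r * ((c : ℕ) / r + 1) ≤ r * i := Nat.mul_le_mul_left _ (by omega)
          have h3 : r * ((c : ℕ) / r + 1) = r * ((c : ℕ) / r) + r := by ring
          have hmd := Nat.mod_add_div (c : ℕ) r
          have hmod := Nat.mod_lt (c : ℕ) hrpos
          rw [if_neg (by omega)]
      · exact fun h => absurd (Finset.mem_range.mpr hdiv) h
    refine ⟨fun s => ((g.coeff s).num).toNat, fun c => ?_⟩
    have h1 : g.coeff ((c : ℕ) % r) = ((m c : ℤ) : ℚ) := by rw [← hcoe c]; norm_num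
    show m c = ((g.coeff ((c : ℕ) % r)).num).toNat
    rw [h1, Rat.num_intCast, Int.toNat_natCast]
  · rintro ⟨a, ha⟩
    set e : Fin p × Fin r ≃ Fin (p ^ k) :=
      finProdFinEquiv.trans (finCongr hqr.symm) with hedef
    rw [← Equiv.sum_comp e (fun c => (m c : ℂ) * ζ ^ (c : ℕ))]
    have he : ∀ x : Fin p × Fin r, ((e x : ℕ)) = (x.2 : ℕ) + r * (x.1 : ℕ) := by
      intro x
      rw [hedef, Equiv.trans_apply, finCongr_apply, Fin.coe_cast, finProdFinEquiv_apply_val]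
    rw [Fintype.sum_prod_type]
    have key : ∀ t : Fin p, ∀ s : Fin r, (m (e (t, s)) : ℂ) * ζ ^ ((e (t, s) : ℕ))
        = (a (s : ℕ) : ℂ) * ζ ^ (s : ℕ) * (ζ ^ r) ^ (t : ℕ) := by
      intro t s
      rw [ha (e (t, s)), he (t, s)]
      have hmod : ((s : ℕ) + r * (t : ℕ)) % r = (s : ℕ) := by
        rw [Nat.add_mul_mod_self_left, Nat.mod_eq_of_lt s.2]
      rw [hmod, pow_add, ← pow_mul]
      ring
    calc ∑ t : Fin p, ∑ s : Fin r, (m (e (t, s)) : ℂ) * ζ ^ ((e (t, s) : ℕ))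
        = ∑ t : Fin p, ∑ s : Fin r, (a (s : ℕ) : ℂ) * ζ ^ (s : ℕ) * (ζ ^ r) ^ (t : ℕ) := by
          exact Finset.sum_congr rfl fun t _ => Finset.sum_congr rfl fun s _ => key t s
    _ = ∑ s : Fin r, (a (s : ℕ) : ℂ) * ζ ^ (s : ℕ) * ∑ t : Fin p, (ζ ^ r) ^ (t : ℕ) := by
          rw [Finset.sum_comm]
          exact Finset.sum_congr rfl fun s _ => by rw [← Finset.mul_sum]
    _ = 0 := by
          have hz : ∑ t : Fin p, ((ζ ^ r) ^ (t : ℕ)) = 0 := by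
            rw [Fin.sum_univ_eq_sum_range]
            exact hζr.geom_sum_eq_zero (by omega)
          simp [hz]

theorem stmt_6 (p k q N : ℕ) (hp : p.Prime) (hk : 1 ≤ k) (hq : q = p ^ k) (hN : p ∣ N) :
    Nat.card {H : Matrix (Fin 2) (Fin N) ℂ //
        (∀ i j, H i j ^ q = 1) ∧ (∀ j, H 0 j = 1) ∧
        ∑ j, H 0 j * (starRingEnd ℂ) (H 1 j) = 0} =
      ∑ a ∈ Finset.Nat.antidiagonalTuple (q / p) (N / p),
        N.factorial / ∏ i, (a i).factorial ^ p := by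
  classical
  have hp2 := hp.two_le
  have hqpos : 0 < q := hq ▸ pow_pos hp.pos k
  haveI : NeZero q := ⟨hqpos.ne'⟩
  set r := q / p with hr
  have hr' : r = p ^ (k - 1) := by
    have h5 : p ^ k = p * p ^ (k - 1) := by rw [← pow_succ']; congr 1; omega
    rw [hr, hq, h5, Nat.mul_div_cancel_left _ hp.pos]
  have hrpos : 0 < r := hr' ▸ pow_pos hp.pos (k - 1)
  have hqr : q = p * r := by rw [hr', hq, ← pow_succ']; congr 1; omega
  have hrq : r ≤ q := by
    calc r = 1 * r := (one_mul r).symm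
    _ ≤ p * r := Nat.mul_le_mul_right r hp.pos
    _ = q := hqr.symm
  set ζ : ℂ := Complex.exp (2 * Real.pi * Complex.I / q) with hζdef
  have hζ : IsPrimitiveRoot ζ q := by
    have := Complex.isPrimitiveRoot_exp q hqpos.ne'
    rwa [hζdef]
  -- Step A : reduce to second row
  have hA : Nat.card {H : Matrix (Fin 2) (Fin N) ℂ //
        (∀ i j, H i j ^ q = 1) ∧ (∀ j, H 0 j = 1) ∧
        ∑ j, H 0 j * (starRingEnd ℂ) (H 1 j) = 0}
      = Nat.card {w : Fin N → Fin q // ∑ j, ζ ^ ((w j : ℕ)) = 0} := by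
    set M : (Fin N → Fin q) → Matrix (Fin 2) (Fin N) ℂ :=
      fun w => Matrix.of ![fun _ => 1, fun j => ζ ^ ((w j : ℕ))] with hMdef
    have hM0 : ∀ w j, M w 0 j = 1 := fun w j => rfl
    have hM1 : ∀ w j, M w 1 j = ζ ^ ((w j : ℕ)) := fun w j => rfl
    have hMpow : ∀ w i j, M w i j ^ q = 1 := by
      intro w i j
      fin_cases i
      · rw [show M w ⟨0, by omega⟩ j = M w 0 j from rfl, hM0, one_pow]
      · rw [show M w ⟨1, by omega⟩ j = M w 1 j from rfl, hM1, ← pow_mul, mul_comm, pow_mul,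
          hζ.pow_eq_one, one_pow]
    have hMorth : ∀ w : {w : Fin N → Fin q // ∑ j, ζ ^ ((w j : ℕ)) = 0},
        ∑ j, M w.1 0 j * (starRingEnd ℂ) (M w.1 1 j) = 0 := by
      intro w
      have h0 : ∑ j, M w.1 0 j * (starRingEnd ℂ) (M w.1 1 j)
          = (starRingEnd ℂ) (∑ j, ζ ^ ((w.1 j : ℕ))) := by
        rw [map_sum]
        refine Finset.sum_congr rfl fun j _ => ?_
        rw [hM0, hM1, one_mul]
      rw [h0, w.2, map_zero]
    refine (Nat.card_congr (Equiv.ofBijective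
      (fun w => ⟨M w.1, hMpow w.1, hM0 w.1, hMorth w⟩) ⟨?_, ?_⟩)).symm
    · -- injective
      rintro ⟨w, hw⟩ ⟨w', hw'⟩ h
      simp only [Subtype.mk.injEq] at h ⊢
      funext j
      have hj : M w 1 j = M w' 1 j := by rw [h]
      rw [hM1, hM1] at hj
      exact Fin.ext (hζ.pow_inj (w j).2 (w' j).2 hj)
    · -- surjective
      rintro ⟨H, h1, h2, h3⟩
      choose i hi hpow using fun j => hζ.eq_pow_of_pow_eq_one (h1 1 j)
      have h3' : (starRingEnd ℂ) (∑ j, H 1 j) = 0 := by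
        rw [map_sum, ← h3]
        refine Finset.sum_congr rfl fun j _ => ?_
        rw [h2 j, one_mul]
      rw [starRingEnd_apply] at h3'
      have hs : ∑ j, H 1 j = 0 := star_eq_zero.mp h3'
      refine ⟨⟨fun j => ⟨i j, hi j⟩, ?_⟩, ?_⟩
      · simpa only [hpow] using hs
      · apply Subtype.ext
        show M _ = H
        funext a j
        fin_cases a
        · exact (hM0 _ j).trans (h2 j).symm
        · exact (hM1 _ j).trans (by exact hpow j)
  rw [hA]
  -- Step B : count by multiplicities
  set cnt : (Fin N → Fin q) → Fin q → ℕ := fun w c => Fintype.card {j // w j = c} with hcnt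
  have hregroup : ∀ w : Fin N → Fin q,
      ∑ j, ζ ^ ((w j : ℕ)) = ∑ c : Fin q, (cnt w c : ℂ) * ζ ^ (c : ℕ) := by
    intro w
    rw [← Finset.sum_fiberwise_of_maps_to (g := w) (fun j _ => Finset.mem_univ (w j))]
    refine Finset.sum_congr rfl fun c _ => ?_
    calc ∑ j ∈ univ.filter (fun j => w j = c), ζ ^ ((w j : ℕ))
        = ∑ _j ∈ univ.filter (fun j => w j = c), ζ ^ ((c : ℕ)) := by
          refine Finset.sum_congr rfl fun j hj => ?_
          rw [(Finset.mem_filter.mp hj).2]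
    _ = (cnt w c : ℂ) * ζ ^ (c : ℕ) := by
          rw [Finset.sum_const, hcnt]
          simp [Fintype.card_subtype, nsmul_eq_mul]
  have hsumcnt : ∀ w, ∑ c, cnt w c = N := by
    intro w
    show ∑ c : Fin q, Fintype.card {j // w j = c} = N
    rw [← Fintype.card_sigma, Fintype.card_congr (Equiv.sigmaFiberEquiv w), Fintype.card_fin]
  have hK2 : ∀ mm : Fin q → ℕ, (∑ c, (mm c : ℂ) * ζ ^ (c : ℕ) = 0 ↔
      ∃ a : ℕ → ℕ, ∀ c : Fin q, mm c = a ((c : ℕ) % r)) := by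
    intro mm
    have := K2 p k q hp hk hq hζ mm
    rwa [← hr'] at this
  set ext : (Fin r → ℕ) → Fin q → ℕ :=
    fun a c => a ⟨(c : ℕ) % r, Nat.mod_lt _ hrpos⟩ with hext
  set Φ : (Fin N → Fin q) → (Fin r → ℕ) := fun w i => cnt w (Fin.castLE hrq i) with hΦ
  -- reindexing equiv
  set e : Fin p × Fin r ≃ Fin q := finProdFinEquiv.trans (finCongr hqr.symm) with hedef
  have he : ∀ x : Fin p × Fin r, ((e x : ℕ)) = (x.2 : ℕ) + r * (x.1 : ℕ) := by
    intro x
    rw [hedef, Equiv.trans_apply, finCongr_apply, Fin.coe_cast, finProdFinEquiv_apply_val]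
  have hemod : ∀ x : Fin p × Fin r, (e x : ℕ) % r = (x.2 : ℕ) := by
    intro x
    rw [he x, Nat.add_mul_mod_self_left, Nat.mod_eq_of_lt x.2.2]
  have hsum_ext : ∀ a : Fin r → ℕ, ∑ c : Fin q, ext a c = p * ∑ i, a i := by
    intro a
    rw [← Equiv.sum_comp e (fun c => ext a c), Fintype.sum_prod_type]
    calc ∑ t : Fin p, ∑ s : Fin r, ext a (e (t, s))
        = ∑ _t : Fin p, ∑ s : Fin r, a s := by
          refine Finset.sum_congr rfl fun t _ => Finset.sum_congr rfl fun s _ => ?_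
          rw [hext]
          show a ⟨(e (t, s) : ℕ) % r, _⟩ = a s
          congr 1
          exact Fin.ext (hemod (t, s))
    _ = p * ∑ i, a i := by rw [Finset.sum_const, Finset.card_univ, Fintype.card_fin, smul_eq_mul]
  have hprod_ext : ∀ a : Fin r → ℕ,
      ∏ c : Fin q, (ext a c).factorial = ∏ i, ((a i).factorial) ^ p := by
    intro a
    rw [← Equiv.prod_comp e (fun c => (ext a c).factorial), Fintype.prod_prod_type]
    calc ∏ t : Fin p, ∏ s : Fin r, (ext a (e (t, s))).factorial
        = ∏ _t : Fin p, ∏ s : Fin r, (a s).factorial := by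
          refine Finset.prod_congr rfl fun t _ => Finset.prod_congr rfl fun s _ => ?_
          rw [hext]
          show ((a ⟨(e (t, s) : ℕ) % r, _⟩).factorial) = _
          congr 2
          exact Fin.ext (hemod (t, s))
    _ = ∏ i, ((a i).factorial) ^ p := by
          rw [Finset.prod_const, Finset.card_univ, Fintype.card_fin, ← Finset.prod_pow]
  have hiff : ∀ w : Fin N → Fin q, ∀ a : Fin r → ℕ,
      ((∑ j, ζ ^ ((w j : ℕ)) = 0) ∧ Φ w = a) ↔ cnt w = ext a := by
    intro w a
    constructor
    · rintro ⟨hc, hφ⟩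
      obtain ⟨a₀, ha₀⟩ := (hK2 (cnt w)).mp (by rw [← hregroup w]; exact hc)
      funext c
      have h1 : ext a c = a₀ ((c : ℕ) % r) := by
        rw [hext]
        show a ⟨(c : ℕ) % r, _⟩ = _
        rw [← hφ, hΦ]
        show cnt w (Fin.castLE hrq ⟨(c : ℕ) % r, _⟩) = _
        rw [ha₀ (Fin.castLE hrq ⟨(c : ℕ) % r, Nat.mod_lt _ hrpos⟩)]
        congr 1
        show ((c : ℕ) % r) % r = (c : ℕ) % r
        exact Nat.mod_mod_of_dvd _ dvd_rfl
      rw [ha₀ c, h1]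
    · intro hm
      constructor
      · rw [hregroup w]
        refine (hK2 (cnt w)).mpr ⟨fun s => if h : s < r then a ⟨s, h⟩ else 0, fun c => ?_⟩
        rw [hm, hext]
        have hlt : (c : ℕ) % r < r := Nat.mod_lt _ hrpos
        show a ⟨(c : ℕ) % r, hlt⟩
          = if h : (c : ℕ) % r < r then a ⟨(c : ℕ) % r, h⟩ else 0
        rw [dif_pos hlt]
      · funext i
        rw [hΦ]
        show cnt w (Fin.castLE hrq i) = a i
        rw [hm, hext]
        show a ⟨((Fin.castLE hrq i : Fin q) : ℕ) % r, _⟩ = a i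
        congr 1
        exact Fin.ext (by simpa using Nat.mod_eq_of_lt i.2)
  -- counting
  rw [Nat.card_eq_fintype_card, Fintype.card_subtype]
  rw [Finset.card_eq_sum_card_fiberwise (f := Φ)
    (t := Finset.Nat.antidiagonalTuple r (N / p)) ?hmaps]
  case hmaps =>
    intro w hw
    rw [Finset.mem_coe, Finset.Nat.mem_antidiagonalTuple]
    have hcond : cnt w = ext (Φ w) := (hiff w (Φ w)).mp ⟨(Finset.mem_filter.mp hw).2, rfl⟩
    have hNN : p * ∑ i, Φ w i = N := by rw [← hsum_ext (Φ w), ← hcond, hsumcnt w]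
    obtain ⟨d, hd⟩ := hN
    rw [hd, Nat.mul_div_cancel_left _ hp.pos]
    rw [hd] at hNN
    exact Nat.eq_of_mul_eq_mul_left hp.pos hNN
  refine Finset.sum_congr rfl fun a ha => ?_
  rw [Finset.Nat.mem_antidiagonalTuple] at ha
  rw [Finset.filter_filter]
  have hfeq : (univ.filter fun w : Fin N → Fin q =>
        (∑ j, ζ ^ ((w j : ℕ)) = 0) ∧ Φ w = a)
      = (univ.filter fun w : Fin N → Fin q =>
        ∀ c, Fintype.card {j // w j = c} = ext a c) := by
    ext w
    simp only [Finset.mem_filter, Finset.mem_univ, true_and]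
    rw [hiff w a]
    exact ⟨fun h c => congrFun h c, fun h => funext h⟩
  rw [hfeq]
  have hsum_ext_a : ∑ c, ext a c = Fintype.card (Fin N) := by
    rw [hsum_ext a, ha, Fintype.card_fin]
    obtain ⟨d, hd⟩ := hN
    rw [hd, Nat.mul_div_cancel_left _ hp.pos]
  have := card_fiber_count (α := Fin N) (ι := Fin q) (ext a) hsum_ext_a
  rw [Nat.card_eq_fintype_card, Fintype.card_subtype] at this
  rw [this, Fintype.card_fin, hprod_ext a]
end

section
/- Let p_1, p_2 be distinct primes, q = p_1 p_2, and w = e^{2πi/q}. A list of q-th roots of unity with multiplicity matrix A ∈ M_{p_1×p_2}(ℕ) (where A_{ij} is the multiplicity of w^{(i-1)p_2+(j-1)}, identifying ℤ/q ≅ ℤ/p_1 × ℤ/p_2) has vanishing sum if and only if there exist B_1, …, B_{p_1} ∈ ℕ and C_1, …, C_{p_2} ∈ ℕ with A_{ij} = B_i + C_j for all i, j. -/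
open Finset

private lemma charSum {q : ℕ} [NeZero q] {w : ℂ} (hw : IsPrimitiveRoot w q)
    {G : Type*} [AddCommGroup G] [Fintype G] (f : G →+ ZMod q) (hf : ∃ g, f g ≠ 0) :
    ∑ g : G, w ^ (f g).val = 0 := by
  have hwq : w ^ q = 1 := hw.pow_eq_one
  have hne : (AddChar.zmodChar q hwq).compAddMonoidHom f ≠ 1 := by
    obtain ⟨g, hg⟩ := hf
    intro h
    have h1 : (AddChar.zmodChar q hwq).compAddMonoidHom f g = 1 := by rw [h]; rfl
    rw [AddChar.compAddMonoidHom_apply, AddChar.zmodChar_apply] at h1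
    exact hw.pow_ne_one_of_pos_of_lt
      (show (f g).val ≠ 0 by simpa [ZMod.val_eq_zero] using hg) ((f g).val_lt) h1
  simpa [AddChar.zmodChar_apply] using AddChar.sum_eq_zero_of_ne_one hne

private lemma pow_val_add {q : ℕ} [NeZero q] {w : ℂ} (hwq : w ^ q = 1) (a b : ZMod q) :
    w ^ (a + b).val = w ^ a.val * w ^ b.val := by
  rw [ZMod.val_add, ← pow_eq_pow_mod _ hwq, pow_add]

theorem stmt_7 (p₁ p₂ : ℕ) [NeZero p₁] [NeZero p₂]
    (hp₁ : p₁.Prime) (hp₂ : p₂.Prime) (hne : p₁ ≠ p₂) (hco : Nat.Coprime p₁ p₂)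
    (w : ℂ) (hw : w = Complex.exp (2 * Real.pi * Complex.I / (p₁ * p₂)))
    (A : ZMod p₁ → ZMod p₂ → ℕ) :
    (∑ i : ZMod p₁, ∑ x : ZMod p₂,
        (A i x : ℂ) * w ^ ((ZMod.chineseRemainder hco).symm (i, x)).val = 0) ↔
      ∃ (B : ZMod p₁ → ℕ) (C : ZMod p₂ → ℕ), ∀ i x, A i x = B i + C x := by
  haveI : Fact (1 < p₁) := ⟨hp₁.one_lt⟩
  haveI : Fact (1 < p₂) := ⟨hp₂.one_lt⟩
  have hq : (p₁ * p₂ : ℕ) ≠ 0 := Nat.mul_ne_zero (NeZero.ne p₁) (NeZero.ne p₂)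
  haveI : NeZero (p₁ * p₂) := ⟨hq⟩
  have hwp : IsPrimitiveRoot w (p₁ * p₂) := by
    have := Complex.isPrimitiveRoot_exp (p₁ * p₂) hq
    rw [hw]; push_cast at this ⊢; exact this
  have hwq : w ^ (p₁ * p₂) = 1 := hwp.pow_eq_one
  set crt := ZMod.chineseRemainder hco with hcrt
  set v : ZMod p₁ × ZMod p₂ → ℂ := fun p => w ^ (crt.symm p).val with hv
  have hsplit : ∀ (i : ZMod p₁) (x : ZMod p₂), v (i, x) = v (i, 0) * v (0, x) := by
    intro i x
    have h : ((i, x) : ZMod p₁ × ZMod p₂) = (i, 0) + (0, x) := by simp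
    rw [hv]; simp only; rw [h, map_add]
    exact pow_val_add hwq _ _
  have hrow : ∀ i : ZMod p₁, ∑ x : ZMod p₂, v (i, x) = 0 := by
    intro i
    let f : ZMod p₂ →+ ZMod (p₁ * p₂) :=
      { toFun := fun x => crt.symm (0, x)
        map_zero' := by simp
        map_add' := by
          intro a b
          show crt.symm (0, a + b) = crt.symm (0, a) + crt.symm (0, b)
          rw [← map_add]
          congr 1
          simp }
    have hf : ∃ g, f g ≠ 0 := by
      refine ⟨1, fun h => ?_⟩
      have := crt.symm.injective (h.trans (map_zero _).symm)
      exact one_ne_zero (congrArg Prod.snd this)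
    have hz := charSum hwp f hf
    calc ∑ x : ZMod p₂, v (i, x) = v (i, 0) * ∑ x : ZMod p₂, v (0, x) := by
          rw [Finset.mul_sum]; exact Finset.sum_congr rfl fun x _ => hsplit i x
      _ = 0 := by rw [show ∑ x : ZMod p₂, v (0, x) = 0 from hz, mul_zero]
  have hcol : ∀ x : ZMod p₂, ∑ i : ZMod p₁, v (i, x) = 0 := by
    intro x
    let f : ZMod p₁ →+ ZMod (p₁ * p₂) :=
      { toFun := fun i => crt.symm (i, 0)
        map_zero' := by simp
        map_add' := by
          intro a b
          show crt.symm (a + b, 0) = crt.symm (a, 0) + crt.symm (b, 0)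
          rw [← map_add]
          congr 1
          simp }
    have hf : ∃ g, f g ≠ 0 := by
      refine ⟨1, fun h => ?_⟩
      have := crt.symm.injective (h.trans (map_zero _).symm)
      exact one_ne_zero (congrArg Prod.fst this)
    have hz := charSum hwp f hf
    calc ∑ i : ZMod p₁, v (i, x) = (∑ i : ZMod p₁, v (i, 0)) * v (0, x) := by
          rw [Finset.sum_mul]; exact Finset.sum_congr rfl fun i _ => hsplit i x
      _ = 0 := by rw [show ∑ i : ZMod p₁, v (i, 0) = 0 from hz, zero_mul]
  have hkey : ∀ (b : ZMod p₁ → ℂ) (c : ZMod p₂ → ℂ),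
      ∑ i : ZMod p₁, ∑ x : ZMod p₂, (b i + c x) * v (i, x) = 0 := by
    intro b c
    have h1 : ∑ i : ZMod p₁, ∑ x : ZMod p₂, b i * v (i, x) = 0 := by
      simp [← Finset.mul_sum, hrow]
    have h2 : ∑ i : ZMod p₁, ∑ x : ZMod p₂, c x * v (i, x) = 0 := by
      rw [Finset.sum_comm]
      simp [← Finset.mul_sum, hcol]
    have h3 : (∑ i : ZMod p₁, ∑ x : ZMod p₂, (b i + c x) * v (i, x))
        = (∑ i : ZMod p₁, ∑ x : ZMod p₂, b i * v (i, x))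
          + ∑ i : ZMod p₁, ∑ x : ZMod p₂, c x * v (i, x) := by
      simp [add_mul, Finset.sum_add_distrib]
    rw [h3, h1, h2, add_zero]
  constructor
  · intro hsum
    -- linear algebra setup
    let φ := Fintype.linearCombination ℚ v
    let ψ : ((ZMod p₁ → ℚ) × (ZMod p₂ → ℚ)) →ₗ[ℚ] (ZMod p₁ × ZMod p₂ → ℚ) :=
      { toFun := fun bc p => bc.1 p.1 + bc.2 p.2
        map_add' := by intro u v'; funext p; simp; ring
        map_smul' := by intro r u; funext p; simp; ring }
    have hWker : LinearMap.range ψ ≤ LinearMap.ker φ := by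
      rintro _ ⟨⟨b, c⟩, rfl⟩
      rw [LinearMap.mem_ker]
      show ∑ p : ZMod p₁ × ZMod p₂, (b p.1 + c p.2) • v p = 0
      rw [Fintype.sum_prod_type]
      have := hkey (fun i => ((b i : ℚ) : ℂ)) (fun x => ((c x : ℚ) : ℂ))
      simpa [Rat.smul_def] using this
    have hker : (fun p : ZMod p₁ × ZMod p₂ => (A p.1 p.2 : ℚ)) ∈ LinearMap.ker φ := by
      rw [LinearMap.mem_ker]
      show ∑ p : ZMod p₁ × ZMod p₂, ((A p.1 p.2 : ℚ)) • v p = 0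
      rw [Fintype.sum_prod_type]
      simp only [Rat.smul_def, Rat.cast_natCast]
      exact hsum
    -- dimension of ker φ
    have hint : IsIntegral ℚ w := by
      refine ⟨Polynomial.X ^ (p₁ * p₂) - 1, Polynomial.monic_X_pow_sub_C 1 hq, ?_⟩
      simp [hwq, sub_eq_zero]
    have hspan : Submodule.span ℚ (Set.range v) =
        Subalgebra.toSubmodule (Algebra.adjoin ℚ ({w} : Set ℂ)) := by
      rw [Algebra.adjoin_eq_span, ← Submonoid.powers_eq_closure]
      congr 1
      rw [Submonoid.coe_powers]
      ext z
      constructor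
      · rintro ⟨p, rfl⟩; exact ⟨(crt.symm p).val, rfl⟩
      · rintro ⟨n, rfl⟩
        refine ⟨crt ((n : ZMod (p₁ * p₂))), ?_⟩
        show w ^ ((crt.symm (crt ((n : ZMod (p₁ * p₂))))).val) = w ^ n
        rw [RingEquiv.symm_apply_apply, ZMod.val_natCast]
        exact (pow_eq_pow_mod n hwq).symm
    have hfr : Module.finrank ℚ (Algebra.adjoin ℚ ({w} : Set ℂ)) = (p₁ - 1) * (p₂ - 1) := by
      rw [(Algebra.adjoin.powerBasis hint).finrank, Algebra.adjoin.powerBasis_dim,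
        ← Polynomial.cyclotomic_eq_minpoly_rat hwp (Nat.pos_of_ne_zero hq),
        Polynomial.natDegree_cyclotomic, Nat.totient_mul hco,
        Nat.totient_prime hp₁, Nat.totient_prime hp₂]
    have hrangedim : Module.finrank ℚ (LinearMap.range φ) = (p₁ - 1) * (p₂ - 1) := by
      rw [show LinearMap.range φ = Submodule.span ℚ (Set.range v) from
        Fintype.range_linearCombination ℚ v, hspan, Subalgebra.finrank_toSubmodule, hfr]
    have hrn := LinearMap.finrank_range_add_finrank_ker φ
    have hdom : Module.finrank ℚ (ZMod p₁ × ZMod p₂ → ℚ) = p₁ * p₂ := by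
      rw [Module.finrank_fintype_fun_eq_card, Fintype.card_prod, ZMod.card, ZMod.card]
    have hkerdim : Module.finrank ℚ (LinearMap.ker φ) = p₁ + p₂ - 1 := by
      rw [hdom, hrangedim] at hrn
      obtain ⟨a, rfl⟩ := Nat.exists_eq_add_of_le hp₁.two_le
      obtain ⟨b, rfl⟩ := Nat.exists_eq_add_of_le hp₂.two_le
      have hx : (2 + a) * (2 + b) = (2 + a - 1) * (2 + b - 1) + (a + b + 3) := by
        have e1 : 2 + a - 1 = 1 + a := by omega
        have e2 : 2 + b - 1 = 1 + b := by omega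
        rw [e1, e2]; ring
      omega
    -- dimension of range ψ
    have hkerψ : LinearMap.ker ψ =
        Submodule.span ℚ {(((fun _ => (1 : ℚ)) : ZMod p₁ → ℚ),
          ((fun _ => (-1 : ℚ)) : ZMod p₂ → ℚ))} := by
      apply le_antisymm
      · rintro ⟨b, c⟩ hbc
        rw [LinearMap.mem_ker] at hbc
        have h : ∀ p : ZMod p₁ × ZMod p₂, b p.1 + c p.2 = 0 := fun p => congrFun hbc p
        rw [Submodule.mem_span_singleton]
        refine ⟨b 0, ?_⟩
        have hb : ∀ i, b i = b 0 := by
          intro i; have h1 := h (i, 0); have h2 := h (0, 0); simp at h1 h2; linarith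
        have hc : ∀ x, c x = -(b 0) := by
          intro x; have h1 := h (0, x); simp at h1; linarith
        refine Prod.ext ?_ ?_
        · funext y; simp [hb y]
        · funext y; simp [hc y]
      · rw [Submodule.span_singleton_le_iff_mem, LinearMap.mem_ker]
        funext p; show (1 : ℚ) + (-1) = 0; ring
    have hkerψdim : Module.finrank ℚ (LinearMap.ker ψ) = 1 := by
      rw [hkerψ]
      refine finrank_span_singleton ?_
      intro h
      have := congrFun (congrArg Prod.fst h) 0
      simp at this
    have hrnψ := LinearMap.finrank_range_add_finrank_ker ψ
    have hdomψ : Module.finrank ℚ ((ZMod p₁ → ℚ) × (ZMod p₂ → ℚ)) = p₁ + p₂ := by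
      rw [Module.finrank_prod, Module.finrank_fintype_fun_eq_card,
        Module.finrank_fintype_fun_eq_card, ZMod.card, ZMod.card]
    have hψdim : Module.finrank ℚ (LinearMap.range ψ) = p₁ + p₂ - 1 := by
      rw [hdomψ, hkerψdim] at hrnψ; omega
    have heq : LinearMap.range ψ = LinearMap.ker φ :=
      Submodule.eq_of_le_of_finrank_eq hWker (by rw [hψdim, hkerdim])
    obtain ⟨⟨b, c⟩, hbc⟩ : (fun p : ZMod p₁ × ZMod p₂ => (A p.1 p.2 : ℚ)) ∈
        LinearMap.range ψ := heq ▸ hker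
    have hq4 : ∀ i x, (A i x : ℚ) = b i + c x := fun i x => (congrFun hbc (i, x)).symm
    obtain ⟨x₀, -, hx₀⟩ := Finset.exists_min_image (Finset.univ : Finset (ZMod p₂))
      (fun x => A 0 x) ⟨0, Finset.mem_univ 0⟩
    refine ⟨fun i => A i x₀, fun x => A 0 x - A 0 x₀, fun i x => ?_⟩
    have key : A i x + A 0 x₀ = A i x₀ + A 0 x := by
      have : ((A i x : ℚ)) + (A 0 x₀ : ℚ) = (A i x₀ : ℚ) + (A 0 x : ℚ) := by
        rw [hq4 i x, hq4 i x₀, hq4 0 x, hq4 0 x₀]; ring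
      exact_mod_cast this
    have hmin := hx₀ x (Finset.mem_univ x)
    show A i x = A i x₀ + (A 0 x - A 0 x₀)
    omega
  · rintro ⟨B, C, hBC⟩
    have := hkey (fun i => ((B i : ℕ) : ℂ)) (fun x => ((C x : ℕ) : ℂ))
    simp only [hBC, Nat.cast_add]
    exact this
end

section
/- Let p ≥ 3 be prime, q = 2p, and N ∈ ℕ. The number of 2×N dephased partial Butson matrices over μ_q (first row all 1s, rows orthogonal) equals Σ_{t∈ℤ} Σ N! / ∏_{i=1}^p (a_i! · (a_i+|t|)!), where the inner sum is over nonnegative integers a_1,…,a_p with 2(a_1+…+a_p) + p|t| = N. -/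
open Finset
open Finset MulAction

variable {β : Type*} [Fintype β] [DecidableEq β] {N : ℕ}

/-- fiber counts of a function -/
def cnt (g : Fin N → β) : β → ℕ := fun w => #(univ.filter fun j => g j = w)

lemma cnt_card_subtype (g : Fin N → β) (w : β) :
    cnt g w = Fintype.card {j // g j = w} := (Fintype.card_subtype _).symm

lemma sum_cnt (g : Fin N → β) : ∑ w, cnt g w = N := by
  have := Finset.card_eq_sum_card_fiberwise (f := g) (s := univ) (t := univ)
    (fun x _ => mem_univ (g x))
  simpa [cnt] using this.symm

lemma cnt_comp_perm (g : Fin N → β) (σ : Equiv.Perm (Fin N)) :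
    cnt (g ∘ σ) = cnt g := by
  funext w
  rw [cnt_card_subtype, cnt_card_subtype]
  exact Fintype.card_congr (σ.subtypeEquiv fun a => Iff.rfl)

/-- fiber of a sigma type over first component -/
def sigmaFst {π : β → Type*} (w : β) : {x : Σ b, π b // x.1 = w} ≃ π w where
  toFun x := cast (congrArg π x.2) x.1.2
  invFun y := ⟨⟨w, y⟩, rfl⟩
  left_inv := by rintro ⟨⟨b, y⟩, rfl⟩; rfl
  right_inv := fun y => rfl

lemma exists_cnt_eq (c : β → ℕ) (hc : ∑ w, c w = N) : ∃ g : Fin N → β, cnt g = c := by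
  have e : (Σ w : β, Fin (c w)) ≃ Fin N :=
    Fintype.equivOfCardEq (by simp [hc])
  refine ⟨fun j => (e.symm j).1, funext fun w => ?_⟩
  rw [cnt_card_subtype]
  calc Fintype.card {j : Fin N // (e.symm j).1 = w}
      = Fintype.card {x : Σ w : β, Fin (c w) // x.1 = w} :=
        Fintype.card_congr (e.subtypeEquiv fun x => by simp).symm
    _ = c w := by rw [Fintype.card_congr (sigmaFst w)]; simp

lemma card_cnt_mul (c : β → ℕ) (hc : ∑ w, c w = N) :
    #(univ.filter fun g : Fin N → β => cnt g = c) * ∏ w, (c w).factorial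
      = N.factorial := by
  classical
  obtain ⟨g₀, hg₀⟩ := exists_cnt_eq c hc
  set G := (Equiv.Perm (Fin N))ᵈᵐᵃ
  haveI : Fintype G := Fintype.ofEquiv _ DomMulAct.mk
  haveI : Fintype (orbit G g₀) := Fintype.ofFinite _
  haveI : Fintype (stabilizer G g₀) := Fintype.ofFinite _
  have key := MulAction.card_orbit_mul_card_stabilizer_eq_card_group G g₀
  -- orbit = functions with cnt = c
  have horb : orbit G g₀ = {g | cnt g = c} := by
    ext g
    constructor
    · rintro ⟨s, rfl⟩
      show cnt (s • g₀) = c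
      have h1 : (s • g₀) = g₀ ∘ (DomMulAct.mk.symm s : Equiv.Perm (Fin N)) := rfl
      rw [h1, cnt_comp_perm, hg₀]
    · intro hg
      have hcards : ∀ w, Fintype.card {j // g j = w} = Fintype.card {j // g₀ j = w} := by
        intro w
        rw [← cnt_card_subtype, ← cnt_card_subtype, hg₀, hg]
      let e : ∀ w, {j // g j = w} ≃ {j // g₀ j = w} := fun w => Fintype.equivOfCardEq (hcards w)
      refine ⟨DomMulAct.mk (Equiv.ofFiberEquiv e), ?_⟩
      funext j
      exact Equiv.ofFiberEquiv_map e j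
  have hcardorb : Fintype.card (orbit G g₀)
      = #(univ.filter fun g : Fin N → β => cnt g = c) := by
    rw [Fintype.card_congr (Equiv.setCongr horb)]
    simp [Fintype.card_subtype]
  -- stabilizer
  have hstab : Fintype.card (stabilizer G g₀) = ∏ w, (c w).factorial := by
    have hbij : Function.Bijective
        (fun u : ∀ w, Equiv.Perm {j // g₀ j = w} =>
          (⟨DomMulAct.mk (Equiv.ofFiberEquiv u), funext fun j =>
            Equiv.ofFiberEquiv_map u j⟩ : stabilizer G g₀)) := by
      constructor
      · intro u u' huu
        have h2 : Equiv.ofFiberEquiv u = Equiv.ofFiberEquiv u' := by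
          have := congrArg (fun s : stabilizer G g₀ => DomMulAct.mk.symm s.1) huu
          simpa using this
        funext w
        refine Equiv.ext fun x => ?_
        obtain ⟨j, rfl⟩ := x
        have h3 := congrFun (congrArg (fun (σ : Fin N ≃ Fin N) => (σ : Fin N → Fin N)) h2) j
        refine Subtype.ext ?_
        simpa [Equiv.ofFiberEquiv, Equiv.sigmaFiberEquiv] using h3
      · rintro ⟨s, hs⟩
        set σ : Equiv.Perm (Fin N) := DomMulAct.mk.symm s with hσ
        have hfix : ∀ j, g₀ (σ j) = g₀ j := by
          intro j
          have := congrFun hs j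
          exact this
        refine ⟨fun w => σ.subtypePerm (fun j => ⟨fun h => by rw [← hfix j]; exact h,
          fun h => by rw [hfix]; exact h⟩), Subtype.ext ?_⟩
        show DomMulAct.mk _ = s
        apply DomMulAct.mk.symm.injective
        rw [Equiv.symm_apply_apply]
        refine Equiv.ext fun j => ?_
        simp [Equiv.ofFiberEquiv, Equiv.sigmaFiberEquiv, hσ]
    rw [← Fintype.card_of_bijective hbij, Fintype.card_pi]
    apply Finset.prod_congr rfl
    intro w _
    rw [Fintype.card_perm, ← cnt_card_subtype, hg₀]
  have hG : Fintype.card G = N.factorial := by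
    rw [Fintype.card_congr (DomMulAct.mk.symm : G ≃ Equiv.Perm (Fin N)),
      Fintype.card_perm, Fintype.card_fin]
  rw [hcardorb, hstab, hG] at key
  exact key

lemma card_cnt_eq (c : β → ℕ) :
    #(univ.filter fun g : Fin N → β => cnt g = c)
      = if ∑ w, c w = N then N.factorial / ∏ w, (c w).factorial else 0 := by
  split_ifs with h
  · exact (Nat.div_eq_of_eq_mul_left (Finset.prod_pos fun w _ => Nat.factorial_pos _)
      (card_cnt_mul c h).symm).symm
  · rw [Finset.card_eq_zero, Finset.filter_eq_empty_iff]
    intro g _ hg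
    exact h (hg ▸ sum_cnt g)

lemma natcard_sum_eq (v : β → ℂ) :
    Nat.card {g : Fin N → β // ∑ j, v (g j) = 0}
      = ∑ c ∈ Fintype.piFinset (fun _ : β => Finset.range (N+1)),
          if (∑ w, c w = N ∧ ∑ w, (c w : ℂ) * v w = 0)
            then N.factorial / ∏ w, (c w).factorial else 0 := by
  classical
  have hsum : ∀ g : Fin N → β, ∑ j, v (g j) = ∑ w, (cnt g w : ℂ) * v w := by
    intro g
    rw [← Finset.sum_fiberwise univ g (fun j => v (g j))]
    apply Finset.sum_congr rfl
    intro w _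
    calc ∑ j ∈ univ.filter (fun j => g j = w), v (g j)
        = ∑ j ∈ univ.filter (fun j => g j = w), v w :=
          Finset.sum_congr rfl (fun j hj => by rw [(mem_filter.1 hj).2])
      _ = (cnt g w : ℂ) * v w := by rw [sum_const, cnt, nsmul_eq_mul]
  rw [Nat.card_eq_fintype_card, Fintype.card_subtype]
  rw [Finset.card_eq_sum_card_fiberwise (f := cnt)
    (t := Fintype.piFinset fun _ : β => Finset.range (N+1))
    (fun g _ => by
      rw [Finset.mem_coe, Fintype.mem_piFinset]
      intro w
      rw [mem_range]
      exact Nat.lt_succ_of_le (le_trans (card_filter_le _ _) (by simp)))]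
  apply Finset.sum_congr rfl
  intro c _
  have hset : ((univ.filter fun g : Fin N → β => ∑ j, v (g j) = 0).filter
        fun g => cnt g = c)
      = if ∑ w, (c w : ℂ) * v w = 0 then univ.filter (fun g : Fin N → β => cnt g = c)
        else ∅ := by
    split_ifs with hC
    · ext g
      simp only [mem_filter, mem_univ, true_and, Finset.notMem_empty]
      exact ⟨fun h => h.2, fun h => ⟨by rw [hsum g, h]; exact hC, h⟩⟩
    · ext g
      simp only [mem_filter, mem_univ, true_and, Finset.notMem_empty, iff_false, not_and]
      intro h1 h2
      rw [hsum g, h2] at h1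
      exact hC h1
  rw [hset]
  split_ifs with hC hN hN
  · rw [card_cnt_eq, if_pos hN.1]
  · rw [card_cnt_eq, if_neg (fun h => hN ⟨h, hC⟩)]
  · exact absurd hN.2 hC
  · simp
open Finset Polynomial

lemma vanish {p : ℕ} (hp : p.Prime) {ζ : ℂ} (hζ : IsPrimitiveRoot ζ p) (d : Fin p → ℤ) :
    ∑ k, (d k : ℂ) * ζ ^ (k : ℕ) = 0 ↔ ∀ k k', d k = d k' := by
  haveI : Fact p.Prime := ⟨hp⟩
  constructor
  · intro h0
    set P : ℚ[X] := ∑ k : Fin p, C ((d k : ℚ)) * X ^ (k : ℕ) with hP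
    have hcoeff : ∀ k : Fin p, P.coeff (k : ℕ) = (d k : ℚ) := by
      intro k
      rw [hP, finset_sum_coeff]
      rw [Finset.sum_eq_single k]
      · simp
      · intro b _ hb
        rw [coeff_C_mul, coeff_X_pow, if_neg (by
          intro hbk
          exact hb (Fin.ext hbk.symm)), mul_zero]
      · simp
    have haev : aeval ζ P = 0 := by
      rw [hP, map_sum]
      rw [← h0]
      apply Finset.sum_congr rfl
      intro k _
      rw [map_mul, aeval_C, map_pow, aeval_X]
      norm_num
    have hdvd : cyclotomic p ℚ ∣ P := by
      rw [cyclotomic_eq_minpoly_rat hζ hp.pos]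
      exact minpoly.dvd ℚ ζ haev
    obtain ⟨s, hs⟩ := hdvd
    have key : ∀ k : Fin p, (d k : ℚ) = s.coeff 0 := by
      rcases eq_or_ne s 0 with h | h
      · intro k
        rw [← hcoeff k, hs, h, mul_zero, coeff_zero, coeff_zero]
      · have hdegP : P.natDegree ≤ p - 1 := by
          apply Polynomial.natDegree_sum_le_of_forall_le
          intro k _
          exact le_trans (natDegree_C_mul_X_pow_le _ _) (Nat.le_sub_one_of_lt k.2)
        have hcyc0 : (cyclotomic p ℚ) ≠ 0 := cyclotomic_ne_zero p ℚ
        have hdeg : P.natDegree = (p - 1) + s.natDegree := by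
          rw [hs, natDegree_mul hcyc0 h, natDegree_cyclotomic, Nat.totient_prime hp]
        have hsdeg : s.natDegree = 0 := by omega
        have hsC : s = C (s.coeff 0) := (Polynomial.eq_C_of_natDegree_eq_zero hsdeg)
        intro k
        rw [← hcoeff k, hs, hsC, cyclotomic_prime]
        rw [mul_comm, coeff_C_mul, finset_sum_coeff]
        have : ∑ b ∈ Finset.range p, (X ^ b : ℚ[X]).coeff (k : ℕ) = 1 := by
          rw [Finset.sum_eq_single (k : ℕ)]
          · simp
          · intro b _ hb
            rw [coeff_X_pow, if_neg (fun hbk => hb hbk.symm)]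
          · intro hk
            exact absurd (Finset.mem_range.2 k.2) hk
        rw [this, mul_one, coeff_C, if_pos rfl]
    intro k k'
    have := (key k).trans (key k').symm
    exact_mod_cast this
  · intro hconst
    have hp1 : 1 < p := hp.one_lt
    have hall : ∀ k : Fin p, d k = d ⟨0, hp.pos⟩ := fun k => hconst k _
    calc ∑ k : Fin p, (d k : ℂ) * ζ ^ (k : ℕ)
        = ∑ k : Fin p, (d ⟨0, hp.pos⟩ : ℂ) * ζ ^ (k : ℕ) := by
          apply Finset.sum_congr rfl; intro k _; rw [hall k]
      _ = (d ⟨0, hp.pos⟩ : ℂ) * ∑ k : Fin p, ζ ^ (k : ℕ) := by rw [Finset.mul_sum]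
      _ = 0 := by
          rw [Fin.sum_univ_eq_sum_range (fun i => ζ ^ i), hζ.geom_sum_eq_zero hp1, mul_zero]
open Finset

noncomputable def rt (p : ℕ) : ℂ := Complex.exp (2 * Real.pi * Complex.I / ((2 * p : ℕ) : ℂ))

noncomputable def zz (p : ℕ) : ℂ := rt p ^ 2

noncomputable def vv (p : ℕ) : Bool × Fin p → ℂ :=
  fun w => (cond w.1 (-1) 1) * zz p ^ (w.2 : ℕ)

section
variable {p : ℕ} (hp : p.Prime) (hp3 : 3 ≤ p)
include hp hp3

lemma hxi : IsPrimitiveRoot (rt p) (2 * p) :=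
  Complex.isPrimitiveRoot_exp _ (by have := hp.pos; omega)

lemma hzeta : IsPrimitiveRoot (zz p) p := (hxi hp hp3).pow (by have := hp.pos; omega) rfl

lemma zz_pow_p : zz p ^ p = 1 := (hzeta hp hp3).pow_eq_one

lemma zz_pow_mod (n : ℕ) : zz p ^ n = zz p ^ (n % p) := by
  conv_lhs => rw [← Nat.div_add_mod n p]
  rw [pow_add, pow_mul, zz_pow_p hp hp3, one_pow, one_mul]

lemma rt_pow_p : rt p ^ p = -1 := by
  have h1 : rt p ^ (2 * p) = 1 := (hxi hp hp3).pow_eq_one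
  have h2 : (rt p ^ p - 1) * (rt p ^ p + 1) = 0 := by
    have h3 : (rt p ^ p) ^ 2 = 1 := by rw [← pow_mul, mul_comm p 2, h1]
    linear_combination h3
  rcases mul_eq_zero.1 h2 with h | h
  · exact absurd (sub_eq_zero.1 h)
      ((hxi hp hp3).pow_ne_one_of_pos_of_lt hp.ne_zero (by omega))
  · exact eq_neg_of_add_eq_zero_left h

lemma vv_pow (w : Bool × Fin p) : vv p w ^ (2 * p) = 1 := by
  rw [vv, mul_pow]
  have h1 : (cond w.1 (-1 : ℂ) 1) ^ (2 * p) = 1 := by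
    rcases w.1 with _ | _
    · simp
    · simp [pow_mul]
  have h2 : ((zz p) ^ (w.2 : ℕ)) ^ (2 * p) = ((zz p) ^ p) ^ (2 * (w.2 : ℕ)) := by
    rw [← pow_mul, ← pow_mul]; ring_nf
  rw [h1, one_mul, h2, zz_pow_p hp hp3, one_pow]

lemma neg_ne (a b : Fin p) : (zz p) ^ (a : ℕ) ≠ -zz p ^ (b : ℕ) := by
  intro hab
  have hodd : Odd p := hp.odd_of_ne_two (by omega)
  have h1 := congrArg (· ^ p) hab
  simp only [neg_pow, ← pow_mul, mul_comm (a : ℕ) p, mul_comm (b : ℕ) p,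
    hodd.neg_one_pow] at h1
  rw [pow_mul, pow_mul, zz_pow_p hp hp3, one_pow, one_pow] at h1
  norm_num at h1

lemma vv_inj : Function.Injective (vv p) := by
  rintro ⟨ε, k⟩ ⟨ε', k'⟩ h
  have hz := hzeta hp hp3
  simp only [vv] at h
  rcases ε with _ | _ <;> rcases ε' with _ | _ <;>
    simp only [cond_true, cond_false, one_mul, neg_one_mul] at h
  · exact Prod.ext rfl (Fin.ext (hz.pow_inj k.2 k'.2 h))
  · exact absurd h (neg_ne hp hp3 k k')
  · exact absurd h.symm (neg_ne hp hp3 k' k)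
  · exact Prod.ext rfl (Fin.ext (hz.pow_inj k.2 k'.2 (neg_inj.1 h)))

lemma vv_surj (z : ℂ) (hz : z ^ (2 * p) = 1) : ∃ w, vv p w = z := by
  haveI : NeZero (2 * p) := ⟨by have := hp.pos; omega⟩
  obtain ⟨i, hi, rfl⟩ := (hxi hp hp3).eq_pow_of_pow_eq_one hz
  rcases Nat.even_or_odd i with ⟨m, hm⟩ | ⟨m, hm⟩
  · have hmp : m < p := by omega
    refine ⟨(false, ⟨m, hmp⟩), ?_⟩
    have : vv p (false, ⟨m, hmp⟩) = zz p ^ m := by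
      simp [vv]
    rw [this, zz, ← pow_mul, hm]
    congr 1
    omega
  · have hxieq : rt p = -(zz p ^ ((p + 1) / 2)) := by
      obtain ⟨r, hr⟩ := hp.odd_of_ne_two (by omega)
      have h2 : 2 * ((p + 1) / 2) = p + 1 := by omega
      rw [zz, ← pow_mul, h2, pow_succ, rt_pow_p hp hp3]
      ring
    refine ⟨(true, ⟨(m + (p + 1) / 2) % p, Nat.mod_lt _ hp.pos⟩), ?_⟩
    have hv : vv p (true, ⟨(m + (p + 1) / 2) % p, Nat.mod_lt _ hp.pos⟩)
        = -(zz p ^ ((m + (p + 1) / 2) % p)) := by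
      simp [vv]
    rw [hv, ← zz_pow_mod hp hp3, pow_add, hm, pow_succ, pow_mul, ← zz, hxieq]
    ring

end

section main
variable {p : ℕ} (hp : p.Prime) (hp3 : 3 ≤ p)
include hp hp3

lemma cond_equiv (c : Bool × Fin p → ℕ) :
    (∑ w, (c w : ℂ) * vv p w = 0)
      ↔ ∀ k k' : Fin p, (c (false, k) : ℤ) - c (true, k)
          = (c (false, k') : ℤ) - c (true, k') := by
  have h1 : ∑ w, (c w : ℂ) * vv p w
      = ∑ k : Fin p, ((((c (false, k) : ℤ) - c (true, k) : ℤ)) : ℂ) * zz p ^ (k : ℕ) := by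
    rw [Fintype.sum_prod_type, Fintype.sum_bool, ← Finset.sum_add_distrib]
    apply Finset.sum_congr rfl
    intro k _
    simp only [vv, cond_true, cond_false, one_mul, neg_one_mul]
    push_cast
    ring
  rw [h1]
  exact vanish hp (hzeta hp hp3) _

lemma reindex (N : ℕ) (k0 : Fin p) :
    (∑ c ∈ Fintype.piFinset (fun _ : Bool × Fin p => Finset.range (N+1)),
      if (∑ w, c w = N ∧ ∀ k k' : Fin p, (c (false, k) : ℤ) - c (true, k)
          = (c (false, k') : ℤ) - c (true, k'))
        then N.factorial / ∏ w, (c w).factorial else 0)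
    = ∑' t : ℤ, ∑ a ∈ Fintype.piFinset (fun _ : Fin p => Finset.range (N + 1)),
        if 2 * (∑ i, a i) + p * t.natAbs = N then
          N.factorial / ∏ i, ((a i).factorial * (a i + t.natAbs).factorial)
        else 0 := by
  classical
  have hppos := hp.pos
  -- tsum to finite sum
  have htsum : (∑' t : ℤ, ∑ a ∈ Fintype.piFinset (fun _ : Fin p => Finset.range (N + 1)),
        if 2 * (∑ i, a i) + p * t.natAbs = N then
          N.factorial / ∏ i, ((a i).factorial * (a i + t.natAbs).factorial)
        else 0)
      = ∑ t ∈ Finset.Icc (-(N : ℤ)) N,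
          ∑ a ∈ Fintype.piFinset (fun _ : Fin p => Finset.range (N + 1)),
        if 2 * (∑ i, a i) + p * t.natAbs = N then
          N.factorial / ∏ i, ((a i).factorial * (a i + t.natAbs).factorial)
        else 0 := by
    apply tsum_eq_sum
    intro t ht
    apply Finset.sum_eq_zero
    intro a _
    rw [if_neg]
    intro hcond
    have h1 : t.natAbs ≤ p * t.natAbs := Nat.le_mul_of_pos_left _ hppos
    have h2 : N < t.natAbs := by
      rw [Finset.mem_Icc] at ht
      omega
    omega
  rw [htsum]
  clear htsum
  -- to product finset
  rw [← Finset.sum_product']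
  -- filter both sides
  rw [← Finset.sum_filter, ← Finset.sum_filter]
  -- bijection
  apply Finset.sum_nbij'
    (i := fun c => ((c (false, k0) : ℤ) - c (true, k0),
      fun k => min (c (false, k)) (c (true, k))))
    (j := fun x => fun w => cond w.1 (x.2 w.2 + (-x.1).toNat) (x.2 w.2 + x.1.toNat))
  · -- hi : maps into RHS filter
    intro c hc
    rw [Finset.mem_filter] at hc ⊢
    dsimp only
    obtain ⟨hmem, hsumN, hconst⟩ := hc
    rw [Fintype.mem_piFinset] at hmem
    have hdecomp : ∀ k : Fin p,
        c (false, k) = min (c (false, k)) (c (true, k))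
            + ((c (false, k0) : ℤ) - c (true, k0)).toNat ∧
        c (true, k) = min (c (false, k)) (c (true, k))
            + (-((c (false, k0) : ℤ) - c (true, k0))).toNat := by
      intro k
      have := hconst k k0
      omega
    have hsplit : ∑ w, c w = (∑ k : Fin p, c (true, k)) + ∑ k : Fin p, c (false, k) := by
      rw [Fintype.sum_prod_type, Fintype.sum_bool]
    have hsum2 : 2 * (∑ k : Fin p, min (c (false, k)) (c (true, k)))
        + p * ((c (false, k0) : ℤ) - c (true, k0)).natAbs = N := by
      rw [← hsumN, hsplit]
      have e1 : ∑ k : Fin p, c (true, k)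
          = (∑ k : Fin p, min (c (false, k)) (c (true, k)))
            + p * (-((c (false, k0) : ℤ) - c (true, k0))).toNat := by
        rw [Finset.sum_congr rfl (fun k _ => (hdecomp k).2), Finset.sum_add_distrib,
          Finset.sum_const, Finset.card_univ, Fintype.card_fin, smul_eq_mul]
      have e2 : ∑ k : Fin p, c (false, k)
          = (∑ k : Fin p, min (c (false, k)) (c (true, k)))
            + p * ((c (false, k0) : ℤ) - c (true, k0)).toNat := by
        rw [Finset.sum_congr rfl (fun k _ => (hdecomp k).1), Finset.sum_add_distrib,
          Finset.sum_const, Finset.card_univ, Fintype.card_fin, smul_eq_mul]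
      rw [e1, e2]
      have e3 : p * (-((c (false, k0) : ℤ) - c (true, k0))).toNat
          + p * ((c (false, k0) : ℤ) - c (true, k0)).toNat
          = p * ((c (false, k0) : ℤ) - c (true, k0)).natAbs := by
        rw [← Nat.mul_add]
        congr 1
        omega
      omega
    constructor
    · -- membership in Icc ×ˢ piFinset
      rw [Finset.mem_product, Finset.mem_Icc, Fintype.mem_piFinset]
      have h1 : ((c (false, k0) : ℤ) - c (true, k0)).natAbs
          ≤ p * ((c (false, k0) : ℤ) - c (true, k0)).natAbs :=
        Nat.le_mul_of_pos_left _ hppos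
      refine ⟨⟨?_, ?_⟩, ?_⟩
      · omega
      · omega
      · intro k
        dsimp only
        rw [Finset.mem_range]
        have h2 := hmem (false, k)
        have h3 := hmem (true, k)
        rw [Finset.mem_range] at h2 h3
        omega
    · exact hsum2
  · -- hj : maps into LHS filter
    rintro ⟨t, a⟩ hx
    rw [Finset.mem_filter] at hx ⊢
    dsimp only
    obtain ⟨hmem, hcond⟩ := hx
    rw [Finset.mem_product, Fintype.mem_piFinset] at hmem
    obtain ⟨hmem1, hmem2⟩ := hmem
    rw [Finset.mem_Icc] at hmem1
    dsimp only at hcond hmem1 hmem2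
    have e3 : p * (-t).toNat + p * t.toNat = p * t.natAbs := by
      rw [← Nat.mul_add]
      congr 1
      omega
    refine ⟨?_, ?_, ?_⟩
    · rw [Fintype.mem_piFinset]
      rintro ⟨ε, k⟩
      rw [Finset.mem_range]
      have h1 : t.natAbs ≤ p * t.natAbs := Nat.le_mul_of_pos_left _ hppos
      have h2 : a k ≤ ∑ i, a i :=
        Finset.single_le_sum (fun i _ => Nat.zero_le (a i)) (Finset.mem_univ k)
      rcases ε with _ | _ <;> simp only [cond_true, cond_false] <;> omega
    · rw [Fintype.sum_prod_type, Fintype.sum_bool]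
      simp only [cond_true, cond_false]
      rw [Finset.sum_add_distrib, Finset.sum_add_distrib, Finset.sum_const,
        Finset.sum_const, Finset.card_univ, Fintype.card_fin, smul_eq_mul, smul_eq_mul]
      omega
    · intro k k'
      simp only [cond_true, cond_false]
      push_cast
      omega
  · -- left inverse
    intro c hc
    rw [Finset.mem_filter] at hc
    obtain ⟨-, -, hconst⟩ := hc
    funext w
    rcases w with ⟨ε, k⟩
    dsimp only
    have := hconst k k0
    rcases ε with _ | _ <;> simp only [cond_true, cond_false] <;> omega
  · -- right inverse
    rintro ⟨t, a⟩ -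
    dsimp only
    simp only [cond_true, cond_false]
    refine Prod.ext ?_ ?_
    · show ((a k0 + t.toNat : ℕ) : ℤ) - (a k0 + (-t).toNat : ℕ) = t
      push_cast
      omega
    · funext k
      show min (a k + t.toNat) (a k + (-t).toNat) = a k
      omega
  · -- terms agree
    intro c hc
    rw [Finset.mem_filter] at hc
    obtain ⟨hmem, hsumN, hconst⟩ := hc
    dsimp only
    congr 1
    rw [Fintype.prod_prod_type, Fintype.prod_bool, ← Finset.prod_mul_distrib]
    apply Finset.prod_congr rfl
    intro k _
    have hk := hconst k k0
    rcases le_total (c (true, k)) (c (false, k)) with hts | hts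
    · have h1 : min (c (false, k)) (c (true, k)) = c (true, k) := by omega
      rw [h1]
      have h2 : c (true, k) + ((c (false, k0) : ℤ) - c (true, k0)).natAbs
          = c (false, k) := by omega
      rw [h2, Nat.mul_comm]
    · have h1 : min (c (false, k)) (c (true, k)) = c (false, k) := by omega
      rw [h1]
      have h2 : c (false, k) + ((c (false, k0) : ℤ) - c (true, k0)).natAbs
          = c (true, k) := by omega
      rw [h2]
      exact Nat.mul_comm _ _

lemma matrix_to_g (N : ℕ) :
    Nat.card {H : Matrix (Fin 2) (Fin N) ℂ //
        (∀ i j, H i j ^ (2 * p) = 1) ∧ (∀ j, H 0 j = 1) ∧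
        ∑ j, H 0 j * (starRingEnd ℂ) (H 1 j) = 0}
      = Nat.card {g : Fin N → Bool × Fin p // ∑ j, vv p (g j) = 0} := by
  classical
  let F : {g : Fin N → Bool × Fin p // ∑ j, vv p (g j) = 0} →
      {H : Matrix (Fin 2) (Fin N) ℂ //
        (∀ i j, H i j ^ (2 * p) = 1) ∧ (∀ j, H 0 j = 1) ∧
        ∑ j, H 0 j * (starRingEnd ℂ) (H 1 j) = 0} := fun g =>
    ⟨Matrix.of fun i j => if i = 0 then 1 else starRingEnd ℂ (vv p (g.1 j)),
     by
      intro i j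
      by_cases hi : i = 0
      · simp [hi]
      · simp only [Matrix.of_apply, if_neg hi]
        rw [← map_pow, vv_pow hp hp3, map_one],
     by
      intro j
      simp,
     by
      have h10 : (1 : Fin 2) ≠ 0 := by decide
      simp only [Matrix.of_apply, if_neg h10, if_pos rfl, if_true, one_mul, Complex.conj_conj]
      exact g.2⟩
  refine (Nat.card_eq_of_bijective F ⟨?_, ?_⟩).symm
  · intro g g' h
    apply Subtype.ext
    funext j
    apply vv_inj hp hp3
    apply (starRingEnd ℂ).injective
    have := congrArg (fun H => H.1 1 j) h
    simpa [F, Matrix.of_apply] using this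
  · rintro ⟨H, hpow, hrow, hsum⟩
    have hpj : ∀ j, (starRingEnd ℂ (H 1 j)) ^ (2 * p) = 1 := fun j => by
      rw [← map_pow, hpow 1 j, map_one]
    choose w hw using fun j => vv_surj hp hp3 _ (hpj j)
    refine ⟨⟨w, ?_⟩, ?_⟩
    · calc ∑ j, vv p (w j) = ∑ j, starRingEnd ℂ (H 1 j) :=
            Finset.sum_congr rfl (fun j _ => hw j)
        _ = ∑ j, H 0 j * starRingEnd ℂ (H 1 j) :=
            Finset.sum_congr rfl (fun j _ => by rw [hrow j, one_mul])
        _ = 0 := hsum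
    · apply Subtype.ext
      show Matrix.of _ = H
      ext i j
      fin_cases i
      · simpa [Matrix.of_apply] using (hrow j).symm
      · have h10 : (1 : Fin 2) ≠ 0 := by decide
        have h1 : (⟨1, by norm_num⟩ : Fin 2) = 1 := rfl
        rw [h1, Matrix.of_apply, if_neg h10, hw j, Complex.conj_conj]

theorem stmt_10' (N : ℕ) :
    Nat.card {H : Matrix (Fin 2) (Fin N) ℂ //
        (∀ i j, H i j ^ (2 * p) = 1) ∧ (∀ j, H 0 j = 1) ∧
        ∑ j, H 0 j * (starRingEnd ℂ) (H 1 j) = 0} =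
      ∑' t : ℤ, ∑ a ∈ Fintype.piFinset (fun _ : Fin p => Finset.range (N + 1)),
        if 2 * (∑ i, a i) + p * t.natAbs = N then
          N.factorial / ∏ i, ((a i).factorial * (a i + t.natAbs).factorial)
        else 0 := by
  classical
  rw [matrix_to_g hp hp3 N, natcard_sum_eq (vv p), ← reindex hp hp3 N ⟨0, hp.pos⟩]
  apply Finset.sum_congr rfl
  intro c _
  exact if_congr (and_congr_right fun _ => cond_equiv hp hp3 c) rfl rfl

end main

theorem stmt_10 (p N : ℕ) (hp : p.Prime) (hp3 : 3 ≤ p) :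
    Nat.card {H : Matrix (Fin 2) (Fin N) ℂ //
        (∀ i j, H i j ^ (2 * p) = 1) ∧ (∀ j, H 0 j = 1) ∧
        ∑ j, H 0 j * (starRingEnd ℂ) (H 1 j) = 0} =
      ∑' t : ℤ, ∑ a ∈ Fintype.piFinset (fun _ : Fin p => Finset.range (N + 1)),
        if 2 * (∑ i, a i) + p * t.natAbs = N then
          N.factorial / ∏ i, ((a i).factorial * (a i + t.natAbs).factorial)
        else 0 :=
  stmt_10' hp hp3 N
end

section
/- Let p be prime, w = e^{2πi/p}, and N ∈ pℕ. A 3×N matrix H over μ_p whose first row is all 1s, whose second row contains each value w^i exactly N/p times grouped in blocks, and whose entries are encoded by a multiplicity matrix A ∈ M_p(ℕ) (where A_{ij} is the number of columns with second entry w^{i-1} and third entry w^{j-1}) has pairwise orthogonal rows if and only if A is tristochastic with common sum N/p, i.e., every row sum, every column sum, and every diagonal sum Σ_i A_{i, i+d} (indices mod p, for each d ∈ ℤ/p) equals N/p. -/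
open Finset Polynomial

lemma equal_coeffs {p : ℕ} [NeZero p] (hp : p.Prime) {w : ℂ} (hw : IsPrimitiveRoot w p)
    (m : ZMod p → ℕ) (hsum : ∑ r : ZMod p, (m r : ℂ) * w ^ r.val = 0) :
    ∀ r : ZMod p, m r = m 0 := by
  haveI : Fact p.Prime := ⟨hp⟩
  set P : Polynomial ℚ := ∑ r : ZMod p, Polynomial.C ((m r : ℚ)) * X ^ r.val with hPdef
  have hcoeff : ∀ t : ZMod p, P.coeff t.val = m t := by
    intro t
    rw [hPdef, finset_sum_coeff]
    rw [Finset.sum_eq_single t]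
    · simp
    · intro r _ hrt
      rw [coeff_C_mul, coeff_X_pow, if_neg, mul_zero]
      exact fun h => hrt (ZMod.val_injective p h.symm)
    · simp
  have haeval : Polynomial.aeval w P = 0 := by
    rw [hPdef, map_sum]
    simpa using hsum
  have hdvd : cyclotomic p ℚ ∣ P := by
    rw [cyclotomic_eq_minpoly_rat hw hp.pos]
    exact minpoly.dvd ℚ w haeval
  obtain ⟨q, hq⟩ := hdvd
  rcases eq_or_ne P 0 with h0 | h0
  · intro r
    have h1 := hcoeff r
    have h2 := hcoeff 0
    rw [h0] at h1 h2
    simp only [h0, coeff_zero] at h1 h2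
    exact_mod_cast h1.symm.trans h2
  · have hq0 : q ≠ 0 := by rintro rfl; simp [hq] at h0
    have hdegP : P.natDegree ≤ p - 1 := by
      rw [hPdef]
      refine Polynomial.natDegree_sum_le_of_forall_le _ _ ?_
      intro r _
      refine le_trans (natDegree_C_mul_le _ _) ?_
      rw [natDegree_X_pow]
      have := ZMod.val_lt r
      omega
    have hdegc : (cyclotomic p ℚ).natDegree = p - 1 := by
      rw [natDegree_cyclotomic, Nat.totient_prime hp]
    have hqdeg : q.natDegree = 0 := by
      have := Polynomial.natDegree_mul (cyclotomic_ne_zero p ℚ) hq0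
      rw [← hq, hdegc] at this
      omega
    obtain ⟨c, rfl⟩ := Polynomial.natDegree_eq_zero.mp hqdeg
    have hcyc : ∀ t : ZMod p, (cyclotomic p ℚ).coeff t.val = 1 := by
      intro t
      rw [cyclotomic_prime, finset_sum_coeff]
      rw [Finset.sum_eq_single t.val]
      · simp
      · intro i _ hit
        rw [coeff_X_pow, if_neg (fun h => hit h.symm)]
      · intro h
        exact absurd (Finset.mem_range.mpr (ZMod.val_lt t)) h
    have key : ∀ t : ZMod p, (m t : ℚ) = c := by
      intro t
      have := hcoeff t
      rw [hq, coeff_mul_C, hcyc t, one_mul] at this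
      exact this.symm
    intro r
    have := (key r).trans (key 0).symm
    exact_mod_cast this

lemma zmod_sum_val {p : ℕ} [NeZero p] (f : ℕ → ℂ) :
    ∑ r : ZMod p, f r.val = ∑ i ∈ Finset.range p, f i := by
  refine Finset.sum_nbij' (fun r => r.val) (fun n => (n : ZMod p)) ?_ ?_ ?_ ?_ ?_
  · intro r _; exact Finset.mem_range.mpr (ZMod.val_lt r)
  · intro n _; exact Finset.mem_univ _
  · intro r _; exact ZMod.natCast_rightInverse r
  · intro n hn; exact ZMod.val_cast_of_lt (Finset.mem_range.mp hn)
  · intro r _; rfl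

lemma count_lemma {p N : ℕ} [NeZero p] (hp : p.Prime) {w : ℂ} (hw : IsPrimitiveRoot w p)
    (e : Fin N → ZMod p) :
    (∑ k, w ^ (e k).val = 0) ↔
      ∀ r : ZMod p, (Finset.univ.filter fun k => e k = r).card = N / p := by
  have hsplit : ∑ k, w ^ (e k).val
      = ∑ r : ZMod p, ((Finset.univ.filter fun k => e k = r).card : ℂ) * w ^ r.val := by
    rw [← Finset.sum_fiberwise_of_maps_to (fun k _ => Finset.mem_univ (e k))
      (fun k => w ^ (e k).val)]
    refine Finset.sum_congr rfl fun r _ => ?_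
    rw [Finset.sum_congr rfl fun k hk => by
      rw [(Finset.mem_filter.mp hk).2], Finset.sum_const, nsmul_eq_mul]
  have htot : ∑ r : ZMod p, (Finset.univ.filter fun k => e k = r).card = N := by
    rw [← Finset.card_eq_sum_card_fiberwise (fun k _ => Finset.mem_univ (e k))]
    simp
  constructor
  · intro h r
    have := equal_coeffs hp hw _ (hsplit ▸ h)
    set c := (Finset.univ.filter fun k => e k = (0 : ZMod p)).card with hc
    have hpc : p * c = N := by
      rw [← htot]
      rw [Finset.sum_congr rfl fun r _ => this r, Finset.sum_const]
      simp [ZMod.card p, mul_comm]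
    rw [this r, ← hpc, Nat.mul_div_cancel_left _ hp.pos]
  · intro h
    rw [hsplit]
    rw [Finset.sum_congr rfl fun r _ => by rw [h r], ← Finset.mul_sum]
    rw [zmod_sum_val (fun i => w ^ i), hw.geom_sum_eq_zero hp.one_lt, mul_zero]

theorem stmt_12 (p N : ℕ) [NeZero p] (hp : p.Prime) (hN : p ∣ N)
    (w : ℂ) (hw : w = Complex.exp (2 * Real.pi * Complex.I / p))
    (H : Matrix (Fin 3) (Fin N) ℂ) (hroot : ∀ i j, H i j ^ p = 1)
    (h0 : ∀ j, H 0 j = 1)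
    (A : ZMod p → ZMod p → ℕ)
    (hA : ∀ i j : ZMod p,
      A i j = Nat.card {k : Fin N // H 1 k = w ^ i.val ∧ H 2 k = w ^ j.val}) :
    (∀ i₁ i₂ : Fin 3, i₁ ≠ i₂ → ∑ k, H i₁ k * (starRingEnd ℂ) (H i₂ k) = 0) ↔
      ((∀ i : ZMod p, ∑ j, A i j = N / p) ∧
       (∀ j : ZMod p, ∑ i, A i j = N / p) ∧
       (∀ d : ZMod p, ∑ i, A i (i + d) = N / p)) := by
  have hwprim : IsPrimitiveRoot w p := hw ▸ Complex.isPrimitiveRoot_exp p (NeZero.ne p)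
  have hw0 : w ≠ 0 := fun h => by simpa [h, zero_pow (NeZero.ne p)] using hwprim.pow_eq_one
  have habs : ‖w‖ = 1 := by
    have h1 : ‖w‖ ^ p = 1 := by rw [← norm_pow, hwprim.pow_eq_one, norm_one]
    rcases (pow_eq_one_iff_cases).mp h1 with h | h | h
    · exact absurd h (NeZero.ne p)
    · exact h
    · exfalso; nlinarith [norm_nonneg w, h.1]
  -- exponents of rows 1 and 2
  choose a ha1 ha2 using fun k => hwprim.eq_pow_of_pow_eq_one (hroot 1 k)
  choose b hb1 hb2 using fun k => hwprim.eq_pow_of_pow_eq_one (hroot 2 k)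
  set α : Fin N → ZMod p := fun k => (a k : ZMod p) with hα
  set β : Fin N → ZMod p := fun k => (b k : ZMod p) with hβ
  have hαval : ∀ k, (α k).val = a k := fun k => ZMod.val_cast_of_lt (ha1 k)
  have hβval : ∀ k, (β k).val = b k := fun k => ZMod.val_cast_of_lt (hb1 k)
  have hH1 : ∀ k, H 1 k = w ^ (α k).val := fun k => by rw [hαval, ha2]
  have hH2 : ∀ k, H 2 k = w ^ (β k).val := fun k => by rw [hβval, hb2]
  have hpow_iff : ∀ (x y : ZMod p), w ^ x.val = w ^ y.val ↔ x = y := by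
    intro x y
    constructor
    · intro h
      have := hwprim.pow_inj (ZMod.val_lt x) (ZMod.val_lt y) h
      exact ZMod.val_injective p this
    · rintro rfl; rfl
  -- A as a filter card
  have hAcard : ∀ i j : ZMod p,
      A i j = (Finset.univ.filter fun k => α k = i ∧ β k = j).card := by
    intro i j
    rw [hA, Nat.card_eq_fintype_card, Fintype.card_subtype]
    congr 1
    ext k
    simp only [Finset.mem_filter, Finset.mem_univ, true_and, hH1 k, hH2 k, hpow_iff]
  -- sums of A
  have hrow : ∀ i : ZMod p, ∑ j, A i j = (Finset.univ.filter fun k => α k = i).card := by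
    intro i
    rw [Finset.card_eq_sum_card_fiberwise
      (f := β) (t := Finset.univ) (fun k _ => Finset.mem_univ _)]
    refine Finset.sum_congr rfl fun j _ => ?_
    rw [hAcard, Finset.filter_filter]
  have hcol : ∀ j : ZMod p, ∑ i, A i j = (Finset.univ.filter fun k => β k = j).card := by
    intro j
    rw [Finset.card_eq_sum_card_fiberwise
      (f := α) (t := Finset.univ) (fun k _ => Finset.mem_univ _)]
    refine Finset.sum_congr rfl fun i _ => ?_
    rw [hAcard, Finset.filter_filter]
    congr 1
    ext k
    simp only [Finset.mem_filter, Finset.mem_univ, true_and]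
    tauto
  have hdiag : ∀ d : ZMod p, ∑ i, A i (i + d)
      = (Finset.univ.filter fun k => β k - α k = d).card := by
    intro d
    rw [Finset.card_eq_sum_card_fiberwise
      (f := α) (t := Finset.univ) (fun k _ => Finset.mem_univ _)]
    refine Finset.sum_congr rfl fun i _ => ?_
    rw [hAcard, Finset.filter_filter]
    congr 1
    ext k
    simp only [Finset.mem_filter, Finset.mem_univ, true_and]
    constructor
    · rintro ⟨rfl, h2⟩
      exact ⟨by rw [h2]; ring, rfl⟩
    · rintro ⟨h1, rfl⟩
      exact ⟨rfl, by rw [← h1]; ring⟩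
  -- conjugation key
  have hconj : ∀ n : ℕ, (starRingEnd ℂ) (w ^ n) = (w ^ n)⁻¹ := by
    intro n
    rw [map_pow, ← Complex.inv_eq_conj habs, inv_pow]
  have hmod : ∀ x y : ZMod p, w ^ (x - y).val * w ^ y.val = w ^ x.val := by
    intro x y
    have hper : ∀ n : ℕ, w ^ n = w ^ (n % p) := by
      intro n
      conv_lhs => rw [← Nat.div_add_mod n p]
      rw [pow_add, pow_mul, hwprim.pow_eq_one, one_pow, one_mul]
    rw [← pow_add, hper, ← ZMod.val_add, sub_add_cancel]
  have hkey : ∀ x y : ZMod p, w ^ x.val * (starRingEnd ℂ) (w ^ y.val) = w ^ (x - y).val := by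
    intro x y
    rw [hconj, ← hmod x y, mul_assoc, mul_inv_cancel₀ (pow_ne_zero _ hw0), mul_one]
  -- the three sums
  have T1 : (∑ k, H 1 k * (starRingEnd ℂ) (H 0 k)) = ∑ k, w ^ (α k).val := by
    refine Finset.sum_congr rfl fun k _ => ?_
    rw [h0, hH1, map_one, mul_one]
  have T2 : (∑ k, H 2 k * (starRingEnd ℂ) (H 0 k)) = ∑ k, w ^ (β k).val := by
    refine Finset.sum_congr rfl fun k _ => ?_
    rw [h0, hH2, map_one, mul_one]
  have T3 : (∑ k, H 2 k * (starRingEnd ℂ) (H 1 k)) = ∑ k, w ^ ((β k - α k : ZMod p)).val := by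
    refine Finset.sum_congr rfl fun k _ => ?_
    rw [hH1, hH2, hkey]
  have flip : ∀ i j : Fin 3, (∑ k, H i k * (starRingEnd ℂ) (H j k))
      = (starRingEnd ℂ) (∑ k, H j k * (starRingEnd ℂ) (H i k)) := by
    intro i j
    rw [map_sum]
    refine Finset.sum_congr rfl fun k _ => ?_
    rw [map_mul, Complex.conj_conj, mul_comm]
  constructor
  · intro hOrth
    refine ⟨?_, ?_, ?_⟩
    · intro i
      rw [hrow i]
      have h := hOrth 1 0 (by decide)
      rw [T1] at h
      exact (count_lemma hp hwprim α).mp h i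
    · intro j
      rw [hcol j]
      have h := hOrth 2 0 (by decide)
      rw [T2] at h
      exact (count_lemma hp hwprim β).mp h j
    · intro d
      rw [hdiag d]
      have h := hOrth 2 1 (by decide)
      rw [T3] at h
      exact (count_lemma hp hwprim (fun k => β k - α k)).mp h d
  · rintro ⟨h1, h2, h3⟩ i₁ i₂ hne
    have o10 : (∑ k, H 1 k * (starRingEnd ℂ) (H 0 k)) = 0 := by
      rw [T1]
      exact (count_lemma hp hwprim α).mpr (fun r => by rw [← hrow r]; exact h1 r)
    have o20 : (∑ k, H 2 k * (starRingEnd ℂ) (H 0 k)) = 0 := by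
      rw [T2]
      exact (count_lemma hp hwprim β).mpr (fun r => by rw [← hcol r]; exact h2 r)
    have o21 : (∑ k, H 2 k * (starRingEnd ℂ) (H 1 k)) = 0 := by
      rw [T3]
      exact (count_lemma hp hwprim (fun k => β k - α k)).mpr
        (fun r => by rw [← hdiag r]; exact h3 r)
    fin_cases i₁ <;> fin_cases i₂ <;> simp only [Fin.isValue] at *
    · exact absurd rfl hne
    · exact (flip 0 1).trans (by rw [o10, map_zero])
    · exact (flip 0 2).trans (by rw [o20, map_zero])
    · exact o10
    · exact absurd rfl hne
    · exact (flip 1 2).trans (by rw [o21, map_zero])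
    · exact o20
    · exact o21
    · exact absurd rfl hne
end

section
/- A 3×3 matrix A ∈ M_3(ℕ) is tristochastic (all row sums, column sums, and all three mod-3 diagonal sums equal) if and only if there exist a, b, c ∈ ℕ with A = [[a,b,c],[b,c,a],[c,a,b]]. -/
theorem stmt_14 (A : Matrix (Fin 3) (Fin 3) ℕ) :
    (∃ n : ℕ, (∀ i, ∑ j, A i j = n) ∧ (∀ j, ∑ i, A i j = n) ∧
      (∀ d : Fin 3, ∑ i, A i (i + d) = n)) ↔
    ∃ a b c : ℕ, A = !![a, b, c; b, c, a; c, a, b] := by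
  constructor
  · rintro ⟨n, hr, hc, hd⟩
    have hr0 := hr 0; have hr1 := hr 1; have hr2 := hr 2
    have hc0 := hc 0; have hc1 := hc 1; have hc2 := hc 2
    have hd0 := hd 0; have hd1 := hd 1; have hd2 := hd 2
    simp [Fin.sum_univ_three, Fin.isValue, show (0:Fin 3)+1 = 1 from rfl,
      show (1:Fin 3)+1 = 2 from rfl, show (2:Fin 3)+1 = 0 from rfl,
      show (0:Fin 3)+2 = 2 from rfl, show (1:Fin 3)+2 = 0 from rfl,
      show (2:Fin 3)+2 = 1 from rfl] at hr0 hr1 hr2 hc0 hc1 hc2 hd0 hd1 hd2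
    refine ⟨A 0 0, A 0 1, A 0 2, ?_⟩
    ext i j
    fin_cases i <;> fin_cases j <;>
      simp [Matrix.cons_val_zero, Matrix.cons_val_one] <;> omega
  · rintro ⟨a, b, c, rfl⟩
    refine ⟨a + b + c, ?_, ?_, ?_⟩ <;> intro i <;> fin_cases i <;>
      simp [Fin.sum_univ_three] <;> ring
end

section
/- Let p be prime and N ∈ pℕ with N > 0. The probability that a uniformly random matrix H ∈ M_{2×N}(μ_p) has orthogonal rows equals (1/p^N) · N! / ((N/p)!)^p. -/
open Finset Equiv Polynomial

private def fiberEquivAux {β : Type*} {n : β → ℕ} (b : β) :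
    {x : Σ b', Fin (n b') // x.1 = b} ≃ Fin (n b) where
  toFun x := Fin.cast (congrArg n x.2) x.1.2
  invFun v := ⟨⟨b, v⟩, rfl⟩
  left_inv := by rintro ⟨⟨b', v⟩, rfl⟩; rfl
  right_inv v := rfl

private lemma count_fun {α β : Type*} [Fintype α] [Fintype β] [DecidableEq α] [DecidableEq β]
    (n : β → ℕ) (hsum : ∑ b, n b = Fintype.card α) :
    Fintype.card {f : α → β // ∀ b, Fintype.card {a // f a = b} = n b} * ∏ b, (n b).factorial =
      (Fintype.card α).factorial := by
  obtain ⟨e⟩ : Nonempty ((Σ b, Fin (n b)) ≃ α) := by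
    apply Fintype.card_eq.mp; simp [hsum]
  set f0 : α → β := fun a => (e.symm a).1 with hf0
  have hfib : ∀ b, Fintype.card {a // f0 a = b} = n b := fun b =>
    Fintype.card_congr (((Equiv.subtypeEquiv e.symm (fun a => Iff.rfl)) :
      {a // f0 a = b} ≃ {x : Σ b', Fin (n b') // x.1 = b}).trans (fiberEquivAux b)) |>.trans
      (Fintype.card_fin _)
  have hfib' : ∀ (σ : Perm α) b, Fintype.card {a // f0 (σ a) = b} = n b := fun σ b =>
    (Fintype.card_congr (Equiv.subtypeEquiv σ (fun a => Iff.rfl))).trans (hfib b)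
  classical
  set t : Finset (α → β) :=
    univ.filter (fun f => ∀ b, Fintype.card {a // f a = b} = n b) with ht
  have hmaps : ∀ σ ∈ (univ : Finset (Perm α)), (f0 ∘ σ) ∈ t := by
    intro σ _
    simp only [ht, mem_filter, mem_univ, true_and]
    exact fun b => hfib' σ b
  have h2 : (univ : Finset (Perm α)).card
      = ∑ f ∈ t, (univ.filter fun σ : Perm α => f0 ∘ σ = f).card :=
    Finset.card_eq_sum_card_fiberwise hmaps
  have h3 : ∀ f ∈ t,
      (univ.filter fun σ : Perm α => f0 ∘ σ = f).card = ∏ b, (n b).factorial := by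
    intro f hf
    simp only [ht, mem_filter, mem_univ, true_and] at hf
    have he : ∀ b, Nonempty ({a // f a = b} ≃ {a // f0 a = b}) := fun b =>
      Fintype.card_eq.mp (by rw [hf b, hfib b])
    have eb : ∀ b, {a // f a = b} ≃ {a // f0 a = b} := fun b => (he b).some
    set σ0 : Perm α := (Equiv.sigmaFiberEquiv f).symm.trans
      ((Equiv.sigmaCongrRight eb).trans (Equiv.sigmaFiberEquiv f0)) with hσ0def
    have hσ0 : ∀ a, f0 (σ0 a) = f a := fun a => (eb (f a) ⟨a, rfl⟩).2
    rw [← Fintype.card_subtype]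
    rw [Fintype.card_congr ((Equiv.mulRight σ0⁻¹).subtypeEquiv (fun σ => ?_) :
      {σ : Perm α // f0 ∘ σ = f} ≃ {g : Perm α // f0 ∘ g = f0})]
    · rw [DomMulAct.stabilizer_card f0]
      exact Finset.prod_congr rfl fun b _ => by rw [hfib b]
    · constructor
      · intro h
        funext a
        have h1 : f0 (σ (σ0⁻¹ a)) = f (σ0⁻¹ a) := congrFun h _
        simp only [Equiv.coe_mulRight, Function.comp_apply, Equiv.Perm.coe_mul]
        rw [h1, ← hσ0 (σ0⁻¹ a), Equiv.Perm.inv_def, Equiv.apply_symm_apply]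
      · intro h
        funext a
        have h1 : f0 ((σ * σ0⁻¹) (σ0 a)) = f0 (σ0 a) := congrFun h _
        simp only [Equiv.Perm.coe_mul, Function.comp_apply, Equiv.Perm.inv_def, Equiv.symm_apply_apply] at h1
        simpa [hσ0 a] using h1
  have h4 : Fintype.card {f : α → β // ∀ b, Fintype.card {a // f a = b} = n b} = t.card := by
    rw [Fintype.card_subtype]
  rw [h4]
  have h5 := h2.trans (Finset.sum_congr rfl h3)
  rw [Finset.sum_const, smul_eq_mul, Finset.card_univ, Fintype.card_perm] at h5
  exact h5.symm

private lemma zmod_sum_range (p : ℕ) [NeZero p] (g : ZMod p → ℂ) :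
    ∑ b : ZMod p, g b = ∑ i ∈ range p, g (i : ZMod p) := by
  apply Finset.sum_nbij' (i := fun (b : ZMod p) => b.val) (j := fun (i : ℕ) => (i : ZMod p))
  · intro b _; exact Finset.mem_range.mpr (ZMod.val_lt b)
  · intro i _; exact Finset.mem_univ _
  · intro b _; exact (ZMod.natCast_val b).trans (ZMod.cast_id _ _)
  · intro i hi; exact ZMod.val_cast_of_lt (Finset.mem_range.mp hi)
  · intro b _; rw [(ZMod.natCast_val b).trans (ZMod.cast_id _ _)]

private lemma equal_coeffs_s19 (p : ℕ) (hp : p.Prime) {ζ : ℂ} (hζ : IsPrimitiveRoot ζ p)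
    (c : ℕ → ℕ) (h : ∑ i ∈ Finset.range p, (c i : ℂ) * ζ ^ i = 0) :
    ∀ i < p, ∀ j < p, c i = c j := by
  haveI : Fact p.Prime := ⟨hp⟩
  set P : ℚ[X] := ∑ i ∈ Finset.range p, C (c i : ℚ) * X ^ i with hP
  have coeffP : ∀ k, k < p → P.coeff k = (c k : ℚ) := by
    intro k hk
    rw [hP, Polynomial.finset_sum_coeff]
    rw [Finset.sum_eq_single k]
    · simp
    · intro i _ hik; simp [Polynomial.coeff_C_mul, Polynomial.coeff_X_pow, Ne.symm hik]
    · intro hk'; exact absurd (Finset.mem_range.mpr hk) hk'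
  by_cases hall : ∀ i < p, c i = 0
  · intro i hi j hj; rw [hall i hi, hall j hj]
  push_neg at hall
  obtain ⟨i0, hi0, hc0⟩ := hall
  have hPne : P ≠ 0 := by
    intro h0
    apply hc0
    have := coeffP i0 hi0
    rw [h0, Polynomial.coeff_zero] at this
    exact_mod_cast this.symm
  have haev : (aeval ζ) P = 0 := by
    rw [hP, map_sum]
    simp only [map_mul, map_pow, aeval_C, aeval_X, eq_ratCast, Rat.cast_natCast]
    exact h
  have hdvd : Polynomial.cyclotomic p ℚ ∣ P := by
    rw [Polynomial.cyclotomic_eq_minpoly_rat hζ hp.pos]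
    exact minpoly.dvd ℚ ζ haev
  obtain ⟨r, hr⟩ := hdvd
  have hrne : r ≠ 0 := by rintro rfl; simp at hr; exact hPne hr
  have hcycne : Polynomial.cyclotomic p ℚ ≠ 0 := Polynomial.cyclotomic_ne_zero p ℚ
  have hdegP : P.natDegree ≤ p - 1 := by
    apply Polynomial.natDegree_sum_le_of_forall_le
    intro i hi
    refine le_trans (Polynomial.natDegree_C_mul_le _ _) ?_
    rw [Polynomial.natDegree_X_pow]
    rw [Finset.mem_range] at hi
    have := hp.pos
    omega
  have hdegr : r.natDegree = 0 := by
    have := Polynomial.natDegree_mul hcycne hrne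
    rw [← hr, Polynomial.natDegree_cyclotomic, Nat.totient_prime hp] at this
    omega
  obtain ⟨a, rfl⟩ := Polynomial.natDegree_eq_zero.mp hdegr
  have hcoe : ∀ k, k < p → (c k : ℚ) = a := by
    intro k hk
    have h1 := coeffP k hk
    rw [hr, Polynomial.coeff_mul_C, Polynomial.cyclotomic_prime ℚ p] at h1
    rw [Polynomial.finset_sum_coeff] at h1
    simp only [Polynomial.coeff_X_pow] at h1
    rw [Finset.sum_ite_eq (Finset.range p) k (fun _ => (1:ℚ)),
      if_pos (Finset.mem_range.mpr hk), one_mul] at h1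
    exact h1.symm
  intro i hi j hj
  have := (hcoe i hi).trans (hcoe j hj).symm
  exact_mod_cast this

private lemma sum_zero_iff (p N : ℕ) (hp : p.Prime) {ζ : ℂ} (hζ : IsPrimitiveRoot ζ p)
    (f : Fin N → ZMod p) :
    (∑ j, ζ ^ (f j).val = 0) ↔
      ∀ b : ZMod p, (univ.filter (fun j => f j = b)).card = N / p := by
  haveI : NeZero p := ⟨hp.pos.ne'⟩
  set c : ZMod p → ℕ := fun b => (univ.filter (fun j => f j = b)).card with hc
  have hsplit : ∑ j, ζ ^ (f j).val = ∑ b : ZMod p, (c b : ℂ) * ζ ^ b.val := by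
    rw [← Finset.sum_fiberwise_of_maps_to (g := f) (fun j _ => Finset.mem_univ (f j))
      (fun j => ζ ^ (f j).val)]
    refine Finset.sum_congr rfl fun b _ => ?_
    rw [Finset.sum_congr rfl (fun j hj => by
      rw [(Finset.mem_filter.mp hj).2]), Finset.sum_const, hc, nsmul_eq_mul]
  have htot : ∑ b : ZMod p, c b = N := by
    have h1 := (Finset.card_eq_sum_card_fiberwise (s := (univ : Finset (Fin N)))
      (t := univ) (f := f) (fun j _ => Finset.mem_univ (f j))).symm
    simpa using h1
  have hzsum : ∑ b : ZMod p, (ζ : ℂ) ^ b.val = 0 := by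
    rw [zmod_sum_range p (fun b => ζ ^ b.val)]
    rw [Finset.sum_congr rfl (fun i hi => by
      rw [ZMod.val_cast_of_lt (Finset.mem_range.mp hi)])]
    exact hζ.geom_sum_eq_zero hp.one_lt
  constructor
  · intro h0 b
    rw [hsplit] at h0
    rw [zmod_sum_range p (fun b => (c b : ℂ) * ζ ^ b.val)] at h0
    rw [Finset.sum_congr rfl (fun i hi => by
      rw [ZMod.val_cast_of_lt (Finset.mem_range.mp hi)])] at h0
    have heq := equal_coeffs_s19 p hp hζ (fun i => c (i : ZMod p)) h0
    have hall : ∀ b' : ZMod p, c b' = c 0 := by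
      intro b'
      have h1 := heq b'.val (ZMod.val_lt b') 0 hp.pos
      simp only [(ZMod.natCast_val b').trans (ZMod.cast_id _ _), Nat.cast_zero] at h1
      exact h1
    have : p * c 0 = N := by
      rw [← htot, Finset.sum_congr rfl (fun b' _ => hall b'), Finset.sum_const,
        Finset.card_univ, ZMod.card, smul_eq_mul]
    show c b = N / p
    rw [hall b, ← this, Nat.mul_div_cancel_left _ hp.pos]
  · intro hb
    rw [hsplit]
    have hcb : ∀ b : ZMod p, (c b : ℂ) * ζ ^ b.val = ((N / p : ℕ) : ℂ) * ζ ^ b.val := by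
      intro b; rw [show c b = N / p from hb b]
    rw [Finset.sum_congr rfl (fun b _ => hcb b), ← Finset.mul_sum, hzsum, mul_zero]

theorem stmt_19 (p N : ℕ) (hp : p.Prime) (hN : p ∣ N) (hN0 : 0 < N) :
    (Nat.card {H : Matrix (Fin 2) (Fin N) ℂ //
        (∀ i j, H i j ^ p = 1) ∧
        ∑ j, H 0 j * (starRingEnd ℂ) (H 1 j) = 0} : ℝ) / p ^ (2 * N) =
      (1 / p ^ N) * ((N.factorial : ℝ) / ((N / p).factorial : ℝ) ^ p) := by
  classical
  haveI : NeZero p := ⟨hp.pos.ne'⟩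
  haveI : Fact p.Prime := ⟨hp⟩
  set ζ : ℂ := Complex.exp (2 * Real.pi * Complex.I / p) with hζdef
  have hζ : IsPrimitiveRoot ζ p := Complex.isPrimitiveRoot_exp p hp.pos.ne'
  -- unit circle fact
  have hnorm : ∀ z : ℂ, z ^ p = 1 → z * (starRingEnd ℂ) z = 1 := by
    intro z hz
    have habs : ‖z‖ = 1 := by
      have h1 : ‖z‖ ^ p = 1 := by rw [← norm_pow, hz, norm_one]
      rcases lt_trichotomy ‖z‖ 1 with hlt | he | hgt
      · have := pow_lt_one₀ (norm_nonneg z) hlt hp.pos.ne'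
        rw [h1] at this; exact absurd this (lt_irrefl _)
      · exact he
      · have := one_lt_pow₀ hgt hp.pos.ne'
        rw [h1] at this; exact absurd this (lt_irrefl _)
    rw [Complex.mul_conj, Complex.normSq_eq_norm_sq, habs]
    norm_num
  -- the equiv with pairs
  set U := {u : Fin N → ℂ // ∀ j, u j ^ p = 1} with hU
  set W := {w : Fin N → ℂ // (∀ j, w j ^ p = 1) ∧ ∑ j, w j = 0} with hW
  have eS : {H : Matrix (Fin 2) (Fin N) ℂ //
      (∀ i j, H i j ^ p = 1) ∧ ∑ j, H 0 j * (starRingEnd ℂ) (H 1 j) = 0} ≃ U × W := by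
    refine ⟨fun H => (⟨fun j => H.1 1 j, fun j => H.2.1 1 j⟩,
      ⟨fun j => H.1 0 j * (starRingEnd ℂ) (H.1 1 j),
        ⟨fun j => by
          rw [mul_pow, ← map_pow, H.2.1 0 j, H.2.1 1 j, map_one, mul_one],
        H.2.2⟩⟩),
      fun uw => ⟨Matrix.of ![fun j => uw.2.1 j * uw.1.1 j, uw.1.1], ?_, ?_⟩, ?_, ?_⟩
    · intro i j
      refine Fin.cases ?_ (fun i' => ?_) i
      · show (uw.2.1 j * uw.1.1 j) ^ p = 1
        rw [mul_pow, uw.2.2.1 j, uw.1.2 j, mul_one]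
      · have : i' = 0 := Subsingleton.elim _ _
        subst this
        show (uw.1.1 j) ^ p = 1
        exact uw.1.2 j
    · show ∑ j, (uw.2.1 j * uw.1.1 j) * (starRingEnd ℂ) (uw.1.1 j) = 0
      rw [Finset.sum_congr rfl (fun j _ => by
        rw [mul_assoc, hnorm _ (uw.1.2 j), mul_one])]
      exact uw.2.2.2
    · intro H
      apply Subtype.ext
      ext i j
      refine Fin.cases ?_ (fun i' => ?_) i
      · show H.1 0 j * (starRingEnd ℂ) (H.1 1 j) * H.1 1 j = H.1 0 j
        rw [mul_assoc, mul_comm ((starRingEnd ℂ) (H.1 1 j)), hnorm _ (H.2.1 1 j), mul_one]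
      · have : i' = 0 := Subsingleton.elim _ _
        subst this
        rfl
    · intro uw
      refine Prod.ext (Subtype.ext rfl) (Subtype.ext ?_)
      funext j
      show (uw.2.1 j * uw.1.1 j) * (starRingEnd ℂ) (uw.1.1 j) = uw.2.1 j
      rw [mul_assoc, hnorm _ (uw.1.2 j), mul_one]
  -- roots of unity equiv
  have hpow : ∀ k : ZMod p, (ζ ^ k.val) ^ p = 1 := by
    intro k
    rw [← pow_mul, mul_comm, pow_mul, hζ.pow_eq_one, one_pow]
  have hinj : Function.Injective (fun k : ZMod p => (⟨ζ ^ k.val, hpow k⟩ : {z : ℂ // z ^ p = 1})) := by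
    intro a b hab
    have hval : ζ ^ a.val = ζ ^ b.val := congrArg Subtype.val hab
    have hv := hζ.pow_inj (ZMod.val_lt a) (ZMod.val_lt b) hval
    exact ZMod.val_injective p hv
  have hsurj : Function.Surjective
      (fun k : ZMod p => (⟨ζ ^ k.val, hpow k⟩ : {z : ℂ // z ^ p = 1})) := by
    rintro ⟨z, hz⟩
    obtain ⟨i, hi, hzi⟩ := hζ.eq_pow_of_pow_eq_one hz
    exact ⟨(i : ZMod p), Subtype.ext (by simp [ZMod.val_cast_of_lt hi, hzi])⟩
  let e0 : ZMod p ≃ {z : ℂ // z ^ p = 1} :=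
    Equiv.ofBijective (fun k => ⟨ζ ^ k.val, hpow k⟩) ⟨hinj, hsurj⟩
  let eU : U ≃ (Fin N → ZMod p) :=
    (Equiv.subtypePiEquivPi.trans (Equiv.piCongrRight (fun _ => e0.symm)))
  have cardU : Nat.card U = p ^ N := by
    rw [Nat.card_congr eU, Nat.card_eq_fintype_card, Fintype.card_fun]
    simp [ZMod.card]
  have hval : ∀ (u : U) (j : Fin N), ζ ^ ((eU u j).val) = u.1 j := by
    intro u j
    exact congrArg Subtype.val (e0.apply_symm_apply ⟨u.1 j, u.2 j⟩)
  have eW : W ≃ {f : Fin N → ZMod p // ∑ j, ζ ^ (f j).val = 0} :=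
    (Equiv.subtypeSubtypeEquivSubtypeInter
      (fun w : Fin N → ℂ => ∀ j, w j ^ p = 1) (fun w => ∑ j, w j = 0)).symm.trans
      (eU.subtypeEquiv (p := fun u : U => ∑ j, (u.1 j) = 0)
        (q := fun f : Fin N → ZMod p => ∑ j, ζ ^ ((f j)).val = 0)
        (fun u => by
          show (∑ j, (u.1 j)) = 0 ↔ (∑ j, ζ ^ ((eU u j).val)) = 0
          rw [Finset.sum_congr rfl fun j _ => hval u j]))
  have cardW : (Nat.card W) * ((N / p).factorial) ^ p = N.factorial := by
    rw [Nat.card_congr eW]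
    have : {f : Fin N → ZMod p // ∑ j, ζ ^ (f j).val = 0} ≃
        {f : Fin N → ZMod p // ∀ b, Fintype.card {j // f j = b} = N / p} := by
      refine Equiv.subtypeEquiv (Equiv.refl _) (fun f => ?_)
      rw [Equiv.refl_apply, sum_zero_iff p N hp hζ f]
      exact forall_congr' fun b => by rw [Fintype.card_subtype]
    rw [Nat.card_congr this, Nat.card_eq_fintype_card]
    have hc := count_fun (α := Fin N) (β := ZMod p) (fun _ => N / p)
      (by simp [ZMod.card, Fintype.card_fin, Nat.mul_div_cancel' hN])
    rw [Finset.prod_const, Finset.card_univ, ZMod.card, Fintype.card_fin] at hc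
    exact hc
  -- assemble
  have cardS : (Nat.card {H : Matrix (Fin 2) (Fin N) ℂ //
      (∀ i j, H i j ^ p = 1) ∧ ∑ j, H 0 j * (starRingEnd ℂ) (H 1 j) = 0}) =
      p ^ N * Nat.card W := by
    rw [Nat.card_congr eS, Nat.card_prod, cardU]
  rw [cardS]
  have hfac : ((N.factorial : ℝ)) = (Nat.card W : ℝ) * ((N / p).factorial : ℝ) ^ p := by
    rw [← cardW]; push_cast; ring
  have hppos : (0 : ℝ) < (p : ℝ) := by exact_mod_cast hp.pos
  have hfpos : (0 : ℝ) < ((N / p).factorial : ℝ) := by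
    exact_mod_cast Nat.factorial_pos _
  rw [hfac]
  rw [two_mul, pow_add]
  push_cast
  field_simp
end
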